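/- arXiv:2503.21452 — 5 statements merged into one kernel-verified Lean document; each statement's English description precedes it below -/
import Mathlib

section
/- For every λ ∈ ℝ, the series Σ_{n=1}^∞ λ^n K_n(t,s) converges absolutely and uniformly on the triangle Δ = {(t,s) : t₀ ≤ s ≤ t ≤ T}; its sum R(t,s,λ) is a continuous function of (t,s) on Δ. -/
open MeasureTheory

/-- The Neumann series Σ λⁿ Kₙ(t,s) converges absolutely and uniformly on the
triangle Δ, and its sum (the resolvent R) is continuous on Δ. -/
theorem resolvent_series_converges
    (t₀ T : ℝ) (ht : t₀ < T)
    (K : ℝ → ℝ → ℝ)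
    (hK : ContinuousOn (fun q : ℝ × ℝ => K q.1 q.2)
      {q : ℝ × ℝ | t₀ ≤ q.2 ∧ q.2 ≤ q.1 ∧ q.1 ≤ T})
    (Kn : ℕ → ℝ → ℝ → ℝ)
    (hKn1 : ∀ t s, Kn 1 t s = K t s)
    (hKnrec : ∀ n, 2 ≤ n → ∀ t s, Kn n t s = ∫ z in s..t, K t z * Kn (n - 1) z s)
    (R : ℝ → ℝ → ℝ → ℝ)
    (hR : ∀ t s lam, R t s lam = ∑' n : ℕ, lam ^ (n + 1) * Kn (n + 1) t s) :
    ∀ lam : ℝ,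
      (∀ t s, t₀ ≤ s → s ≤ t → t ≤ T →
        Summable (fun n : ℕ => |lam ^ (n + 1) * Kn (n + 1) t s|)) ∧
      TendstoUniformlyOn
        (fun N (q : ℝ × ℝ) => ∑ n ∈ Finset.range N, lam ^ (n + 1) * Kn (n + 1) q.1 q.2)
        (fun q : ℝ × ℝ => R q.1 q.2 lam) Filter.atTop
        {q : ℝ × ℝ | t₀ ≤ q.2 ∧ q.2 ≤ q.1 ∧ q.1 ≤ T} ∧
      ContinuousOn (fun q : ℝ × ℝ => R q.1 q.2 lam)
        {q : ℝ × ℝ | t₀ ≤ q.2 ∧ q.2 ≤ q.1 ∧ q.1 ≤ T} := by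
  intro lam
  set Δ : Set (ℝ × ℝ) := {q : ℝ × ℝ | t₀ ≤ q.2 ∧ q.2 ≤ q.1 ∧ q.1 ≤ T} with hΔ
  -- Δ is closed and compact
  have hclosed : IsClosed Δ := by
    have h1 : Δ = {q : ℝ × ℝ | t₀ ≤ q.2} ∩ ({q | q.2 ≤ q.1} ∩ {q | q.1 ≤ T}) := rfl
    rw [h1]
    exact (isClosed_le continuous_const continuous_snd).inter
      ((isClosed_le continuous_snd continuous_fst).inter
        (isClosed_le continuous_fst continuous_const))
  have hsub : Δ ⊆ Set.Icc (t₀, t₀) (T, T) := by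
    rintro ⟨a, b⟩ ⟨h1, h2, h3⟩
    exact ⟨⟨le_trans h1 h2, h1⟩, ⟨h3, le_trans h2 h3⟩⟩
  have hcompact : IsCompact Δ := IsCompact.of_isClosed_subset isCompact_Icc hclosed hsub
  -- Tietze extension of K to the whole plane
  obtain ⟨g, hg⟩ := ContinuousMap.exists_restrict_eq (Y := ℝ) hclosed
    ⟨Δ.restrict (fun q : ℝ × ℝ => K q.1 q.2), hK.restrict⟩
  have hgK : ∀ q ∈ Δ, g q = K q.1 q.2 := fun q hq => DFunLike.congr_fun hg ⟨q, hq⟩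
  -- bound on g over Δ
  obtain ⟨C, hC⟩ := hcompact.exists_bound_of_continuousOn (map_continuous g).continuousOn
  set M : ℝ := max C 0 with hM
  have hM0 : 0 ≤ M := le_max_right _ _
  have hMg : ∀ q ∈ Δ, |g q| ≤ M := fun q hq => le_trans (hC q hq) (le_max_left _ _)
  -- iterated kernels of g
  set J : ℕ → ℝ × ℝ → ℝ := fun n =>
    Nat.rec (fun q => g q)
      (fun _ Jn q => ∫ z in q.2..q.1, g (q.1, z) * Jn (z, q.2)) n with hJdef
  have hJ0 : ∀ q, J 0 q = g q := fun _ => rfl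
  have hJsucc : ∀ n q, J (n + 1) q = ∫ z in q.2..q.1, g (q.1, z) * J n (z, q.2) :=
    fun _ _ => rfl
  -- continuity of J n
  have hJc : ∀ n, Continuous (J n) := by
    intro n
    induction n with
    | zero => exact map_continuous g
    | succ n ih =>
      have hint : Continuous (Function.uncurry fun (q : ℝ × ℝ) (z : ℝ) =>
          g (q.1, z) * J n (z, q.2)) := by
        apply Continuous.mul
        · exact (map_continuous g).comp
            ((continuous_fst.fst).prodMk continuous_snd)
        · exact ih.comp (continuous_snd.prodMk continuous_fst.snd)
      have h1 : Continuous fun q : ℝ × ℝ =>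
          ∫ z in (0:ℝ)..q.1, g (q.1, z) * J n (z, q.2) :=
        intervalIntegral.continuous_parametric_intervalIntegral_of_continuous hint continuous_fst
      have h2 : Continuous fun q : ℝ × ℝ =>
          ∫ z in (0:ℝ)..q.2, g (q.1, z) * J n (z, q.2) :=
        intervalIntegral.continuous_parametric_intervalIntegral_of_continuous hint continuous_snd
      have heq : J (n + 1) = fun q : ℝ × ℝ =>
          (∫ z in (0:ℝ)..q.1, g (q.1, z) * J n (z, q.2)) -
          (∫ z in (0:ℝ)..q.2, g (q.1, z) * J n (z, q.2)) := by
        funext q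
        have hcq : Continuous fun z : ℝ => g (q.1, z) * J n (z, q.2) := by
          apply Continuous.mul
          · exact (map_continuous g).comp (continuous_const.prodMk continuous_id)
          · exact ih.comp (continuous_id.prodMk continuous_const)
        rw [hJsucc]
        exact (intervalIntegral.integral_interval_sub_left
          (hcq.intervalIntegrable _ _) (hcq.intervalIntegrable _ _)).symm
      rw [heq]
      exact h1.sub h2
  -- the bound |J n q| ≤ M^(n+1) (q.1-q.2)^n / n!
  have hJb : ∀ n, ∀ q ∈ Δ, |J n q| ≤ M ^ (n + 1) * (q.1 - q.2) ^ n / n.factorial := by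
    intro n
    induction n with
    | zero =>
      intro q hq
      simpa [hJ0] using hMg q hq
    | succ n ih =>
      rintro ⟨t, s⟩ ⟨h1, h2, h3⟩
      have hzΔ : ∀ z ∈ Set.Icc s t, ((t, z) ∈ Δ ∧ (z, s) ∈ Δ) := by
        rintro z ⟨hz1, hz2⟩
        exact ⟨⟨le_trans h1 hz1, hz2, h3⟩, ⟨h1, hz1, le_trans hz2 h3⟩⟩
      have hcont1 : Continuous fun z => g (t, z) * J n (z, s) := by
        apply Continuous.mul
        · exact (map_continuous g).comp (continuous_const.prodMk continuous_id)
        · exact (hJc n).comp (continuous_id.prodMk continuous_const)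
      have key : ∀ z ∈ Set.Icc s t,
          |g (t, z) * J n (z, s)| ≤ M * (M ^ (n + 1) * (z - s) ^ n / n.factorial) := by
        intro z hz
        obtain ⟨hA, hB⟩ := hzΔ z hz
        rw [abs_mul]
        have b1 := hMg _ hA
        have b2 := ih (z, s) hB
        have hnn : (0:ℝ) ≤ M ^ (n + 1) * (z - s) ^ n / n.factorial := by
          apply div_nonneg
          · exact mul_nonneg (pow_nonneg hM0 _) (pow_nonneg (by linarith [hz.1]) _)
          · positivity
        exact mul_le_mul b1 b2 (abs_nonneg _) hM0
      calc |J (n + 1) (t, s)|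
          = |∫ z in s..t, g (t, z) * J n (z, s)| := rfl
        _ ≤ ∫ z in s..t, |g (t, z) * J n (z, s)| :=
            intervalIntegral.abs_integral_le_integral_abs h2
        _ ≤ ∫ z in s..t, M * (M ^ (n + 1) * (z - s) ^ n / n.factorial) := by
            apply intervalIntegral.integral_mono_on h2
            · exact hcont1.abs.intervalIntegrable _ _
            · exact (continuous_const.mul (Continuous.div_const
                (continuous_const.mul ((continuous_id.sub continuous_const).pow n))
                _)).intervalIntegrable _ _
            · exact key
        _ = M ^ (n + 1 + 1) * (t - s) ^ (n + 1) / (n + 1).factorial := by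
            have e1 : ∀ z : ℝ, M * (M ^ (n + 1) * (z - s) ^ n / n.factorial)
                = (M ^ (n + 1 + 1) / n.factorial) * (z - s) ^ n := by
              intro z; ring
            rw [intervalIntegral.integral_congr (g := fun z =>
              (M ^ (n + 1 + 1) / n.factorial) * (z - s) ^ n) (fun z _ => e1 z)]
            rw [intervalIntegral.integral_const_mul]
            have e2 : (∫ z in s..t, (z - s) ^ n) = (t - s) ^ (n + 1) / (n + 1) := by
              rw [intervalIntegral.integral_comp_sub_right (fun x => x ^ n) s]
              simp [integral_pow]
            have e3 : (((n + 1).factorial : ℕ) : ℝ) = ((n : ℝ) + 1) * n.factorial := by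
              rw [Nat.factorial_succ]; push_cast; ring
            rw [e2, e3, div_mul_div_comm, mul_comm ((n.factorial : ℝ)) ((n : ℝ) + 1)]
  -- Kn (n+1) = J n on Δ
  have hEq : ∀ n, ∀ q ∈ Δ, Kn (n + 1) q.1 q.2 = J n q := by
    intro n
    induction n with
    | zero =>
      rintro ⟨t, s⟩ hq
      rw [hKn1]
      exact (hgK _ hq).symm
    | succ n ih =>
      rintro ⟨t, s⟩ ⟨h1, h2, h3⟩
      rw [hKnrec (n + 2) (by omega)]
      show (∫ z in s..t, K t z * Kn (n + 1) z s) = ∫ z in s..t, g (t, z) * J n (z, s)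
      apply intervalIntegral.integral_congr
      intro z hz
      rw [Set.uIcc_of_le h2] at hz
      dsimp only
      have hA : ((t, z) : ℝ × ℝ) ∈ Δ := ⟨le_trans h1 hz.1, hz.2, h3⟩
      have hB : ((z, s) : ℝ × ℝ) ∈ Δ := ⟨h1, hz.1, le_trans hz.2 h3⟩
      rw [hgK _ hA, ih (z, s) hB]
  -- the dominating series
  set u : ℕ → ℝ := fun n => |lam| ^ (n + 1) * (M ^ (n + 1) * (T - t₀) ^ n / n.factorial)
    with hu_def
  have hu : Summable u := by
    have h := (Real.summable_pow_div_factorial (|lam| * M * (T - t₀))).mul_left (|lam| * M)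
    apply h.congr
    intro n
    simp only [hu_def]
    rw [mul_pow, mul_pow]
    ring
  -- the uniform bound
  have hb : ∀ n : ℕ, ∀ q ∈ Δ, ‖lam ^ (n + 1) * Kn (n + 1) q.1 q.2‖ ≤ u n := by
    intro n q hq
    rw [Real.norm_eq_abs, abs_mul, abs_pow, hEq n q hq]
    have h1 := hJb n q hq
    have h2 : (q.1 - q.2) ^ n ≤ (T - t₀) ^ n := by
      obtain ⟨ha, hb', hc⟩ := hq
      apply pow_le_pow_left₀ (by linarith) (by linarith)
    have h3 : |J n q| ≤ M ^ (n + 1) * (T - t₀) ^ n / n.factorial := by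
      refine le_trans h1 ?_
      have hfpos : (0:ℝ) < n.factorial := by positivity
      exact (div_le_div_iff_of_pos_right hfpos).mpr
        (mul_le_mul_of_nonneg_left h2 (pow_nonneg hM0 _))
    exact mul_le_mul_of_nonneg_left h3 (pow_nonneg (abs_nonneg _) _)
  -- conclusion
  have htuo : TendstoUniformlyOn
      (fun N (q : ℝ × ℝ) => ∑ n ∈ Finset.range N, lam ^ (n + 1) * Kn (n + 1) q.1 q.2)
      (fun q : ℝ × ℝ => ∑' n : ℕ, lam ^ (n + 1) * Kn (n + 1) q.1 q.2) Filter.atTop Δ :=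
    tendstoUniformlyOn_tsum_nat hu (fun n q hq => hb n q hq)
  have hRtuo : TendstoUniformlyOn
      (fun N (q : ℝ × ℝ) => ∑ n ∈ Finset.range N, lam ^ (n + 1) * Kn (n + 1) q.1 q.2)
      (fun q : ℝ × ℝ => R q.1 q.2 lam) Filter.atTop Δ := by
    have : (fun q : ℝ × ℝ => R q.1 q.2 lam)
        = fun q : ℝ × ℝ => ∑' n : ℕ, lam ^ (n + 1) * Kn (n + 1) q.1 q.2 := by
      funext q; exact hR q.1 q.2 lam
    rw [this]; exact htuo
  refine ⟨?_, hRtuo, ?_⟩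
  · intro t s h1 h2 h3
    have hq : ((t, s) : ℝ × ℝ) ∈ Δ := ⟨h1, h2, h3⟩
    apply Summable.of_nonneg_of_le (fun n => abs_nonneg _) (fun n => ?_) hu
    have := hb n (t, s) hq
    rwa [Real.norm_eq_abs] at this
  · apply hRtuo.continuousOn
    apply Filter.Eventually.frequently
    filter_upwards with N
    have hc : Continuous fun q : ℝ × ℝ =>
        ∑ n ∈ Finset.range N, lam ^ (n + 1) * J n q := by
      apply continuous_finset_sum
      intro n _
      exact continuous_const.mul (hJc n)
    apply hc.continuousOn.congr
    intro q hq
    exact Finset.sum_congr rfl fun n _ => by rw [hEq n q hq]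
end

section
/- The resolvent satisfies the resolvent identity: for every λ ∈ ℝ and all (t,s) with t₀ ≤ s ≤ t ≤ T, R(t,s,λ) = λ K(t,s) + λ ∫_s^t K(t,z) R(z,s,λ) dz. -/
open MeasureTheory

/-- The resolvent identity: R(t,s,λ) = λ K(t,s) + λ ∫ₛᵗ K(t,z) R(z,s,λ) dz on Δ. -/
theorem resolvent_identity
    (t₀ T : ℝ) (ht : t₀ < T)
    (K : ℝ → ℝ → ℝ)
    (hK : ContinuousOn (fun q : ℝ × ℝ => K q.1 q.2)
      {q : ℝ × ℝ | t₀ ≤ q.2 ∧ q.2 ≤ q.1 ∧ q.1 ≤ T})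
    (Kn : ℕ → ℝ → ℝ → ℝ)
    (hKn1 : ∀ t s, Kn 1 t s = K t s)
    (hKnrec : ∀ n, 2 ≤ n → ∀ t s, Kn n t s = ∫ z in s..t, K t z * Kn (n - 1) z s)
    (R : ℝ → ℝ → ℝ → ℝ)
    (hR : ∀ t s lam, R t s lam = ∑' n : ℕ, lam ^ (n + 1) * Kn (n + 1) t s) :
    ∀ lam : ℝ, ∀ t s, t₀ ≤ s → s ≤ t → t ≤ T →
      R t s lam = lam * K t s + lam * ∫ z in s..t, K t z * R z s lam := by
  intro lam t s hs hst htT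
  set Δ : Set (ℝ × ℝ) := {q : ℝ × ℝ | t₀ ≤ q.2 ∧ q.2 ≤ q.1 ∧ q.1 ≤ T} with hΔdef
  have hΔclosed : IsClosed Δ := by
    have h1 : IsClosed {q : ℝ × ℝ | t₀ ≤ q.2} := isClosed_le continuous_const continuous_snd
    have h2 : IsClosed {q : ℝ × ℝ | q.2 ≤ q.1} := isClosed_le continuous_snd continuous_fst
    have h3 : IsClosed {q : ℝ × ℝ | q.1 ≤ T} := isClosed_le continuous_fst continuous_const
    exact h1.inter (h2.inter h3)
  -- Tietze extension of K to all of ℝ × ℝ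
  obtain ⟨g, hgres⟩ := ContinuousMap.exists_restrict_eq (Y := ℝ) hΔclosed
    ⟨Δ.restrict (fun q : ℝ × ℝ => K q.1 q.2), hK.restrict⟩
  have hg' : ∀ a b : ℝ, t₀ ≤ b → b ≤ a → a ≤ T → g (a, b) = K a b := by
    intro a b h1 h2 h3
    exact ContinuousMap.congr_fun hgres ⟨(a, b), ⟨h1, h2, h3⟩⟩
  -- compactness of Δ and bound on g
  have hΔsub : Δ ⊆ Set.Icc t₀ T ×ˢ Set.Icc t₀ T := by
    rintro q ⟨h1, h2, h3⟩
    exact ⟨⟨h1.trans h2, h3⟩, ⟨h1, h2.trans h3⟩⟩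
  have hΔcpt : IsCompact Δ :=
    (isCompact_Icc.prod isCompact_Icc).of_isClosed_subset hΔclosed hΔsub
  obtain ⟨M0, hM0⟩ := hΔcpt.exists_bound_of_continuousOn g.continuous.continuousOn
  set M : ℝ := max M0 0 with hMdef
  have hM : 0 ≤ M := le_max_right _ _
  have hMg : ∀ a b : ℝ, t₀ ≤ b → b ≤ a → a ≤ T → |g (a, b)| ≤ M := by
    intro a b h1 h2 h3
    exact le_trans (by rw [← Real.norm_eq_abs]; exact hM0 (a, b) ⟨h1, h2, h3⟩) (le_max_left _ _)
  -- iterated kernels of the extension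
  let Q : ℕ → ℝ × ℝ → ℝ := fun n =>
    Nat.rec (fun p => g p) (fun _ Qn p => ∫ z in p.2..p.1, g (p.1, z) * Qn (z, p.2)) n
  have hQ0 : ∀ p, Q 0 p = g p := fun _ => rfl
  have hQsucc : ∀ n p, Q (n + 1) p = ∫ z in p.2..p.1, g (p.1, z) * Q n (z, p.2) :=
    fun _ _ => rfl
  -- continuity of Q n
  have hQc : ∀ n, Continuous (Q n) := by
    intro n
    induction n with
    | zero => exact g.continuous
    | succ n ih =>
      have hf : Continuous (Function.uncurry
          (fun (p : ℝ × ℝ) (z : ℝ) => g (p.1, z) * Q n (z, p.2))) := by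
        apply Continuous.mul
        · exact g.continuous.comp (by fun_prop)
        · exact ih.comp (by fun_prop)
      have h1 : Continuous fun p : ℝ × ℝ => ∫ z in t₀..p.1, g (p.1, z) * Q n (z, p.2) :=
        intervalIntegral.continuous_parametric_intervalIntegral_of_continuous hf continuous_fst
      have h2 : Continuous fun p : ℝ × ℝ => ∫ z in t₀..p.2, g (p.1, z) * Q n (z, p.2) :=
        intervalIntegral.continuous_parametric_intervalIntegral_of_continuous hf continuous_snd
      have key : ∀ p : ℝ × ℝ, Q (n + 1) p =
          (∫ z in t₀..p.1, g (p.1, z) * Q n (z, p.2)) -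
            ∫ z in t₀..p.2, g (p.1, z) * Q n (z, p.2) := by
        intro p
        rw [hQsucc]
        have hi : ∀ a b : ℝ, IntervalIntegrable (fun z => g (p.1, z) * Q n (z, p.2))
            volume a b := by
          intro a b
          exact ((g.continuous.comp (by fun_prop)).mul (ih.comp (by fun_prop))).intervalIntegrable a b
        rw [intervalIntegral.integral_interval_sub_left (hi t₀ p.1) (hi t₀ p.2)]
      rw [funext key]
      exact h1.sub h2
  -- Q agrees with Kn on Δ
  have hQK : ∀ n, ∀ a b : ℝ, t₀ ≤ b → b ≤ a → a ≤ T → Q n (a, b) = Kn (n + 1) a b := by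
    intro n
    induction n with
    | zero =>
      intro a b h1 h2 h3
      rw [hQ0, hg' a b h1 h2 h3, hKn1]
    | succ n ih =>
      intro a b h1 h2 h3
      have hrec := hKnrec (n + 2) (by omega) a b
      have hn : n + 2 - 1 = n + 1 := rfl
      rw [hn] at hrec
      rw [hQsucc, show n + 1 + 1 = n + 2 from rfl, hrec]
      apply intervalIntegral.integral_congr
      intro z hz
      rw [Set.uIcc_of_le h2] at hz
      have hz1 : b ≤ z := hz.1
      have hz2 : z ≤ a := hz.2
      show g (a, z) * Q n (z, b) = K a z * Kn (n + 1) z b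
      rw [hg' a z (h1.trans hz1) hz2 h3, ih z b h1 hz1 (hz2.trans h3)]
  -- bound on Q n
  have hQb : ∀ n, ∀ a b : ℝ, t₀ ≤ b → b ≤ a → a ≤ T →
      |Q n (a, b)| ≤ M ^ (n + 1) * (a - b) ^ n / n.factorial := by
    intro n
    induction n with
    | zero =>
      intro a b h1 h2 h3
      simpa [hQ0] using hMg a b h1 h2 h3
    | succ n ih =>
      intro a b h1 h2 h3
      rw [hQsucc]
      have hbnd : ∀ᵐ z ∂(volume.restrict (Set.uIoc b a)),
          ‖g (a, z) * Q n (z, b)‖ ≤ M * (M ^ (n + 1) * (z - b) ^ n / n.factorial) := by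
        · filter_upwards [ae_restrict_mem measurableSet_uIoc] with z hz
          rw [Set.uIoc_of_le h2] at hz
          rw [Real.norm_eq_abs, abs_mul]
          have hgb := hMg a z (h1.trans hz.1.le) hz.2 h3
          have hq := ih z b h1 hz.1.le (hz.2.trans h3)
          have h0 : (0:ℝ) ≤ |Q n (z, b)| := abs_nonneg _
          nlinarith [abs_nonneg (g (a, z)), mul_le_mul hgb hq h0 hM]
      have hgint : IntervalIntegrable (fun z => M * (M ^ (n + 1) * (z - b) ^ n / n.factorial))
          volume b a := (by fun_prop : Continuous fun z : ℝ =>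
            M * (M ^ (n + 1) * (z - b) ^ n / n.factorial)).intervalIntegrable b a
      have hle := intervalIntegral.norm_integral_le_abs_of_norm_le hbnd hgint
      rw [Real.norm_eq_abs] at hle
      refine hle.trans ?_
      have hval : (∫ z in b..a, M * (M ^ (n + 1) * (z - b) ^ n / n.factorial)) =
          M ^ (n + 2) * (a - b) ^ (n + 1) / (n + 1).factorial := by
        have hpow : (∫ z in b..a, (z - b) ^ n) = (a - b) ^ (n + 1) / (n + 1) := by
          rw [intervalIntegral.integral_comp_sub_right (fun x => x ^ n) b, sub_self,
            integral_pow]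
          rw [zero_pow (Nat.succ_ne_zero n)]
          push_cast
          ring
        have : (fun z : ℝ => M * (M ^ (n + 1) * (z - b) ^ n / n.factorial)) =
            fun z : ℝ => (M * (M ^ (n + 1) / n.factorial)) * (z - b) ^ n := by
          funext z; ring
        rw [this, intervalIntegral.integral_const_mul, hpow]
        have hfac : ((n + 1).factorial : ℝ) = (n + 1) * n.factorial := by
          rw [Nat.factorial_succ]; push_cast; ring
        have hnfac : (n.factorial : ℝ) ≠ 0 := Nat.cast_ne_zero.mpr n.factorial_ne_zero
        have hn1 : ((n : ℝ) + 1) ≠ 0 := by positivity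
        rw [hfac]
        field_simp
        ring
      rw [hval]
      have : (0:ℝ) ≤ M ^ (n + 2) * (a - b) ^ (n + 1) / (n + 1).factorial := by
        have : (0:ℝ) ≤ a - b := sub_nonneg.mpr h2
        positivity
      rw [abs_of_nonneg this]
  -- summable majorant
  have hTt : (0:ℝ) ≤ T - t₀ := by linarith
  have hsum_c : Summable (fun n : ℕ =>
      |lam| ^ (n + 1) * (M ^ (n + 1) * (T - t₀) ^ n / n.factorial)) := by
    have h := (Real.summable_pow_div_factorial (|lam| * M * (T - t₀))).mul_left (|lam| * M)
    refine h.congr fun n => ?_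
    rw [mul_pow, mul_pow, pow_succ, pow_succ]
    field_simp
  -- termwise bound
  have hterm : ∀ n, ∀ a b : ℝ, t₀ ≤ b → b ≤ a → a ≤ T →
      |lam ^ (n + 1) * Q n (a, b)| ≤
        |lam| ^ (n + 1) * (M ^ (n + 1) * (T - t₀) ^ n / n.factorial) := by
    intro n a b h1 h2 h3
    rw [abs_mul, abs_pow]
    have hq := hQb n a b h1 h2 h3
    have hab : (a - b) ^ n ≤ (T - t₀) ^ n := by
      apply pow_le_pow_left₀ (by linarith) (by linarith)
    have h' : M ^ (n + 1) * (a - b) ^ n / n.factorial ≤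
        M ^ (n + 1) * (T - t₀) ^ n / n.factorial := by
      gcongr
    exact mul_le_mul_of_nonneg_left (hq.trans h') (by positivity)
  have hsumQ : ∀ a b : ℝ, t₀ ≤ b → b ≤ a → a ≤ T →
      Summable (fun n : ℕ => lam ^ (n + 1) * Q n (a, b)) := by
    intro a b h1 h2 h3
    apply Summable.of_abs
    exact hsum_c.of_nonneg_of_le (fun n => abs_nonneg _) (fun n => hterm n a b h1 h2 h3)
  have hRQ : ∀ a b : ℝ, t₀ ≤ b → b ≤ a → a ≤ T →
      R a b lam = ∑' n : ℕ, lam ^ (n + 1) * Q n (a, b) := by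
    intro a b h1 h2 h3
    rw [hR]
    exact tsum_congr fun n => by rw [hQK n a b h1 h2 h3]
  -- main integral computation
  have hint : (∫ z in s..t, K t z * R z s lam) =
      ∑' n : ℕ, lam ^ (n + 1) * Q (n + 1) (t, s) := by
    have h1 : (∫ z in s..t, K t z * R z s lam) =
        ∫ z in s..t, ∑' n : ℕ, lam ^ (n + 1) * (g (t, z) * Q n (z, s)) := by
      apply intervalIntegral.integral_congr
      intro z hz
      rw [Set.uIcc_of_le hst] at hz
      have hz1 : s ≤ z := hz.1
      have hz2 : z ≤ t := hz.2
      show K t z * R z s lam = ∑' n : ℕ, lam ^ (n + 1) * (g (t, z) * Q n (z, s))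
      rw [← hg' t z (hs.trans hz1) hz2 htT, hRQ z s hs hz1 (hz2.trans htT),
        ← tsum_mul_left]
      exact tsum_congr fun n => by ring
    rw [h1, intervalIntegral.integral_of_le hst]
    have hFint : ∀ n : ℕ, Integrable
        (fun z => lam ^ (n + 1) * (g (t, z) * Q n (z, s)))
        (volume.restrict (Set.Ioc s t)) := by
      intro n
      have hc : Continuous fun z : ℝ => lam ^ (n + 1) * (g (t, z) * Q n (z, s)) := by
        apply continuous_const.mul
        exact (g.continuous.comp (by fun_prop)).mul ((hQc n).comp (by fun_prop))
      exact hc.integrableOn_Ioc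
    have hFsum : Summable fun n : ℕ =>
        ∫ z in Set.Ioc s t, ‖lam ^ (n + 1) * (g (t, z) * Q n (z, s))‖ := by
      have hmaj : Summable fun n : ℕ =>
          (t - s) * (M * (|lam| ^ (n + 1) * (M ^ (n + 1) * (T - t₀) ^ n / n.factorial))) := by
        refine ((hsum_c.mul_left ((t - s) * M)).congr fun n => ?_)
        ring
      refine hmaj.of_nonneg_of_le
        (fun n => integral_nonneg fun z => norm_nonneg _) (fun n => ?_)
      have hb : ∀ z ∈ Set.Ioc s t, ‖lam ^ (n + 1) * (g (t, z) * Q n (z, s))‖ ≤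
          M * (|lam| ^ (n + 1) * (M ^ (n + 1) * (T - t₀) ^ n / n.factorial)) := by
        intro z hz
        rw [Real.norm_eq_abs, abs_mul, abs_mul, abs_pow]
        have hgb := hMg t z (hs.trans hz.1.le) hz.2 htT
        have hq := hterm n z s hs hz.1.le (hz.2.trans htT)
        rw [abs_mul, abs_pow] at hq
        have h0 : (0:ℝ) ≤ |lam| ^ (n + 1) := by positivity
        nlinarith [abs_nonneg (Q n (z, s)), abs_nonneg (g (t, z)),
          mul_le_mul hgb (le_refl (|lam| ^ (n+1) * |Q n (z, s)|)) (by positivity) hM]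
      calc (∫ z in Set.Ioc s t, ‖lam ^ (n + 1) * (g (t, z) * Q n (z, s))‖)
          ≤ ∫ _z in Set.Ioc s t,
              M * (|lam| ^ (n + 1) * (M ^ (n + 1) * (T - t₀) ^ n / n.factorial)) := by
            apply setIntegral_mono_on (hFint n).norm (integrableOn_const
              (by rw [Real.volume_Ioc]; exact ENNReal.ofReal_ne_top))
              measurableSet_Ioc hb
        _ = (t - s) * (M * (|lam| ^ (n + 1) * (M ^ (n + 1) * (T - t₀) ^ n / n.factorial))) := by
            rw [setIntegral_const, Real.volume_real_Ioc_of_le hst,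
              smul_eq_mul]
    rw [← MeasureTheory.integral_tsum_of_summable_integral_norm hFint hFsum]
    refine tsum_congr fun n => ?_
    rw [← intervalIntegral.integral_of_le hst, intervalIntegral.integral_const_mul,
      hQsucc n (t, s)]
  -- assemble
  rw [hRQ t s hs hst htT, hint, Summable.tsum_eq_zero_add (hsumQ t s hs hst htT)]
  congr 1
  · rw [hQ0, hg' t s hs hst htT, pow_one]
  · rw [← tsum_mul_left]
    exact tsum_congr fun n => by rw [pow_succ]; ring
end

section
/- For every λ ∈ ℝ and every continuous g : [t₀,T] → ℝ, the classical Volterra integral equation of the second kind x(t) = λ ∫_{t₀}^t K(t,s) x(s) ds + g(t), t ∈ [t₀,T], has exactly one continuous solution, and it is given by x(t) = g(t) + ∫_{t₀}^t R(t,s,λ) g(s) ds. -/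
open MeasureTheory intervalIntegral

lemma vhelper_pow_int {a b : ℝ} (n : ℕ) :
    (∫ z in a..b, (z - a) ^ n) = (b - a) ^ (n + 1) / (n + 1) := by
  rw [integral_comp_sub_right (fun x => x ^ n) a, integral_pow]
  simp

lemma vhelper_pow_int' {a b : ℝ} (n : ℕ) :
    (∫ z in a..b, (b - z) ^ n) = (b - a) ^ (n + 1) / (n + 1) := by
  rw [integral_comp_sub_left (fun x => x ^ n) b, integral_pow]
  simp

lemma vhelper1 {a b c : ℝ} (hab : a ≤ b) (hc : 0 ≤ c) (n : ℕ) (f : ℝ → ℝ)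
    (hf : IntervalIntegrable f volume a b)
    (hbd : ∀ z ∈ Set.Ioc a b, |f z| ≤ c * (z - a) ^ n) :
    |∫ z in a..b, f z| ≤ c * (b - a) ^ (n + 1) / (n + 1) := by
  have h1 : ‖∫ z in a..b, f z‖ ≤ |∫ z in a..b, c * (z - a) ^ n| := by
    apply intervalIntegral.norm_integral_le_abs_of_norm_le
    · rw [Set.uIoc_of_le hab]
      filter_upwards [ae_restrict_mem measurableSet_Ioc] with z hz
      simpa [Real.norm_eq_abs] using hbd z hz
    · exact Continuous.intervalIntegrable (by fun_prop) _ _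
  have h2 : (∫ z in a..b, c * (z - a) ^ n) = c * ((b - a) ^ (n + 1) / (n + 1)) := by
    rw [intervalIntegral.integral_const_mul, vhelper_pow_int]
  rw [Real.norm_eq_abs] at h1
  rw [h2] at h1
  have hnn : 0 ≤ c * ((b - a) ^ (n + 1) / (n + 1)) := by
    apply mul_nonneg hc
    apply div_nonneg (pow_nonneg (by linarith) _) (by positivity)
  rw [abs_of_nonneg hnn] at h1
  rw [mul_div_assoc]; exact h1

lemma vhelper2 {a b c : ℝ} (hab : a ≤ b) (hc : 0 ≤ c) (n : ℕ) (f : ℝ → ℝ)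
    (hf : IntervalIntegrable f volume a b)
    (hbd : ∀ z ∈ Set.Ioc a b, |f z| ≤ c * (b - z) ^ n) :
    |∫ z in a..b, f z| ≤ c * (b - a) ^ (n + 1) / (n + 1) := by
  have h1 : ‖∫ z in a..b, f z‖ ≤ |∫ z in a..b, c * (b - z) ^ n| := by
    apply intervalIntegral.norm_integral_le_abs_of_norm_le
    · rw [Set.uIoc_of_le hab]
      filter_upwards [ae_restrict_mem measurableSet_Ioc] with z hz
      simpa [Real.norm_eq_abs] using hbd z hz
    · exact Continuous.intervalIntegrable (by fun_prop) _ _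
  have h2 : (∫ z in a..b, c * (b - z) ^ n) = c * ((b - a) ^ (n + 1) / (n + 1)) := by
    rw [intervalIntegral.integral_const_mul, vhelper_pow_int']
  rw [Real.norm_eq_abs] at h1
  rw [h2] at h1
  have hnn : 0 ≤ c * ((b - a) ^ (n + 1) / (n + 1)) := by
    apply mul_nonneg hc
    apply div_nonneg (pow_nonneg (by linarith) _) (by positivity)
  rw [abs_of_nonneg hnn] at h1
  rw [mul_div_assoc]; exact h1

lemma vfubini_triangle {a b : ℝ} (hab : a ≤ b) (H : ℝ → ℝ → ℝ)
    (hH : Continuous fun p : ℝ × ℝ => H p.1 p.2) :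
    (∫ s in a..b, ∫ z in a..s, H s z) = ∫ z in a..b, ∫ s in z..b, H s z := by
  set μ := volume.restrict (Set.Ioc a b) with hμ
  haveI : IsFiniteMeasure μ := by
    constructor
    rw [hμ, Measure.restrict_apply MeasurableSet.univ, Set.univ_inter, Real.volume_Ioc]
    exact ENNReal.ofReal_lt_top
  set F : ℝ → ℝ → ℝ := fun s z => Set.indicator (Set.Ioc a s) (H s) z with hF
  -- measurability of uncurried F
  have hFmeas : AEStronglyMeasurable (Function.uncurry F) (μ.prod μ) := by
    have : Function.uncurry F =
        Set.indicator {p : ℝ × ℝ | a < p.2 ∧ p.2 ≤ p.1} (fun p => H p.1 p.2) := by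
      funext p
      simp only [Function.uncurry, hF, Set.indicator, Set.mem_Ioc, Set.mem_setOf_eq]
    rw [this]
    exact (hH.stronglyMeasurable.indicator
      ((measurableSet_lt measurable_const measurable_snd).inter
        (measurableSet_le measurable_snd measurable_fst))).aestronglyMeasurable
  obtain ⟨C, hC⟩ := (isCompact_Icc.prod isCompact_Icc).exists_bound_of_continuousOn
    (s := Set.Icc a b ×ˢ Set.Icc a b) hH.continuousOn
  have hFint : Integrable (Function.uncurry F) (μ.prod μ) := by
    apply Integrable.mono' (integrable_const C) hFmeas
    rw [hμ, Measure.prod_restrict]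
    filter_upwards [ae_restrict_mem (measurableSet_Ioc.prod measurableSet_Ioc)] with p hp
    simp only [Function.uncurry, hF]
    rw [Real.norm_eq_abs]
    have hC0 : 0 ≤ C := le_trans (abs_nonneg _) (hC (a, a) (by simp [Set.mem_Icc, hab]))
    by_cases h : p.2 ∈ Set.Ioc a p.1
    · rw [Set.indicator_of_mem h]
      exact hC (p.1, p.2) ⟨Set.Ioc_subset_Icc_self hp.1, Set.Ioc_subset_Icc_self hp.2⟩
    · rw [Set.indicator_of_notMem h]; simpa using hC0
  -- Step 1: rewrite LHS
  have step1 : (∫ s in a..b, ∫ z in a..s, H s z) = ∫ s, ∫ z, F s z ∂μ ∂μ := by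
    rw [integral_of_le hab]
    apply setIntegral_congr_fun measurableSet_Ioc
    intro s hs
    show (∫ z in a..s, H s z) = ∫ z, F s z ∂μ
    rw [integral_of_le hs.1.le,
      show (∫ z, F s z ∂μ) = ∫ z in Set.Ioc a b ∩ Set.Ioc a s, H s z from
        setIntegral_indicator measurableSet_Ioc]
    congr 1
    rw [Set.Ioc_inter_Ioc, sup_idem, inf_eq_right.mpr hs.2]
  -- Step 2: swap
  have step2 : (∫ s, ∫ z, F s z ∂μ ∂μ) = ∫ z, ∫ s, F s z ∂μ ∂μ :=
    integral_integral_swap hFint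
  -- Step 3: rewrite RHS
  have step3 : (∫ z, ∫ s, F s z ∂μ ∂μ) = ∫ z in a..b, ∫ s in z..b, H s z := by
    rw [integral_of_le hab, hμ]
    apply setIntegral_congr_fun measurableSet_Ioc
    intro z hz
    have heq : ∀ s, F s z = Set.indicator (Set.Ici z) (fun s => H s z) s := by
      intro s
      simp only [hF, Set.indicator, Set.mem_Ioc, Set.mem_Ici]
      by_cases h : z ≤ s <;> simp [h, hz.1]
    calc (∫ s, F s z ∂volume.restrict (Set.Ioc a b))
        = ∫ s in Set.Ioc a b, Set.indicator (Set.Ici z) (fun s => H s z) s := by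
          apply integral_congr_ae (Filter.Eventually.of_forall fun s => heq s)
      _ = ∫ s in Set.Ioc a b ∩ Set.Ici z, H s z := setIntegral_indicator measurableSet_Ici
      _ = ∫ s in Set.Ioc z b, H s z := by
          have hset : Set.Ioc a b ∩ Set.Ici z = Set.Icc z b := by
            ext s
            simp only [Set.mem_inter_iff, Set.mem_Ioc, Set.mem_Ici, Set.mem_Icc]
            constructor
            · rintro ⟨⟨_, h2⟩, h3⟩; exact ⟨h3, h2⟩
            · rintro ⟨h1, h2⟩; exact ⟨⟨lt_of_lt_of_le hz.1 h1, h2⟩, h1⟩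
          rw [hset, integral_Icc_eq_integral_Ioc]
      _ = ∫ s in z..b, H s z := (integral_of_le hz.2).symm
  rw [step1, step2, step3]

noncomputable def viterK (Kb : ℝ → ℝ → ℝ) : ℕ → ℝ → ℝ → ℝ
  | 0 => Kb
  | n + 1 => fun t s => ∫ z in s..t, Kb t z * viterK Kb n z s

lemma viterK_cont {Kb : ℝ → ℝ → ℝ} (hKb : Continuous fun p : ℝ × ℝ => Kb p.1 p.2) :
    ∀ n, Continuous fun p : ℝ × ℝ => viterK Kb n p.1 p.2 := by
  intro n
  induction n with
  | zero => exact hKb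
  | succ n ih =>
    have hint : Continuous fun q : (ℝ × ℝ) × ℝ => Kb q.1.1 q.2 * viterK Kb n q.2 q.1.2 := by
      apply Continuous.mul
      · exact hKb.comp ((continuous_fst.fst).prodMk continuous_snd)
      · exact ih.comp (continuous_snd.prodMk continuous_fst.snd)
    have key : ∀ p : ℝ × ℝ, viterK Kb (n + 1) p.1 p.2 =
        (∫ z in (0:ℝ)..p.1, Kb p.1 z * viterK Kb n z p.2) -
        ∫ z in (0:ℝ)..p.2, Kb p.1 z * viterK Kb n z p.2 := by
      intro p
      show (∫ z in p.2..p.1, Kb p.1 z * viterK Kb n z p.2) = _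
      rw [integral_interval_sub_left]
      · exact Continuous.intervalIntegrable
          ((hKb.comp (continuous_const.prodMk continuous_id)).mul
            (ih.comp (continuous_id.prodMk continuous_const))) _ _
      · exact Continuous.intervalIntegrable
          ((hKb.comp (continuous_const.prodMk continuous_id)).mul
            (ih.comp (continuous_id.prodMk continuous_const))) _ _
    simp_rw [key]
    apply Continuous.sub
    · exact continuous_parametric_intervalIntegral_of_continuous
        (f := fun (p : ℝ × ℝ) z => Kb p.1 z * viterK Kb n z p.2) hint continuous_fst
    · exact continuous_parametric_intervalIntegral_of_continuous
        (f := fun (p : ℝ × ℝ) z => Kb p.1 z * viterK Kb n z p.2) hint continuous_snd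

lemma viterK_bound {Kb : ℝ → ℝ → ℝ} (hKb : Continuous fun p : ℝ × ℝ => Kb p.1 p.2)
    {M : ℝ} (hM0 : 0 ≤ M) (hM : ∀ t s, |Kb t s| ≤ M) :
    ∀ n t s, |viterK Kb n t s| ≤ M ^ (n + 1) * |t - s| ^ n / n.factorial := by
  intro n
  induction n with
  | zero => intro t s; simpa [viterK] using hM t s
  | succ n ih =>
    intro t s
    have hcont : Continuous fun z => Kb t z * viterK Kb n z s :=
      (hKb.comp (continuous_const.prodMk continuous_id)).mul
        ((viterK_cont hKb n).comp (continuous_id.prodMk continuous_const))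
    have hc : (0:ℝ) ≤ M ^ (n + 2) / n.factorial := by positivity
    have harith : M ^ (n + 2) / n.factorial * |t - s| ^ (n + 1) / (n + 1) =
        M ^ (n + 1 + 1) * |t - s| ^ (n + 1) / (n + 1).factorial := by
      rw [Nat.factorial_succ]
      push_cast
      have h1 : (n.factorial : ℝ) ≠ 0 := Nat.cast_ne_zero.mpr n.factorial_ne_zero
      have h2 : ((n : ℝ) + 1) ≠ 0 := by positivity
      field_simp
    rcases le_total s t with hts | hts
    · have := vhelper1 hts hc n (fun z => Kb t z * viterK Kb n z s)
        (hcont.intervalIntegrable _ _) ?_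
      · show |∫ z in s..t, Kb t z * viterK Kb n z s| ≤ _
        rw [abs_of_nonneg (sub_nonneg.mpr hts)] at harith ⊢
        calc |∫ z in s..t, Kb t z * viterK Kb n z s|
            ≤ M ^ (n + 2) / n.factorial * (t - s) ^ (n + 1) / (n + 1) := this
          _ = _ := harith
      · intro z hz
        rw [abs_mul]
        calc |Kb t z| * |viterK Kb n z s| ≤ M * (M ^ (n + 1) * |z - s| ^ n / n.factorial) :=
              mul_le_mul (hM t z) (ih z s) (abs_nonneg _) hM0
          _ = M ^ (n + 2) / n.factorial * (z - s) ^ n := by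
              rw [abs_of_nonneg (sub_nonneg.mpr hz.1.le)]; ring
    · have := vhelper2 hts hc n (fun z => Kb t z * viterK Kb n z s)
        (hcont.intervalIntegrable _ _) ?_
      · show |∫ z in s..t, Kb t z * viterK Kb n z s| ≤ _
        rw [integral_symm, abs_neg]
        rw [abs_of_nonpos (sub_nonpos.mpr hts), neg_sub] at harith ⊢
        calc |∫ z in t..s, Kb t z * viterK Kb n z s|
            ≤ M ^ (n + 2) / n.factorial * (s - t) ^ (n + 1) / (n + 1) := this
          _ = _ := harith
      · intro z hz
        rw [abs_mul]
        calc |Kb t z| * |viterK Kb n z s| ≤ M * (M ^ (n + 1) * |z - s| ^ n / n.factorial) :=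
              mul_le_mul (hM t z) (ih z s) (abs_nonneg _) hM0
          _ = M ^ (n + 2) / n.factorial * (s - z) ^ n := by
              rw [abs_of_nonpos (sub_nonpos.mpr hz.2)]; rw [neg_sub]; ring


/-- The classical Volterra integral equation of the second kind
x(t) = λ ∫_{t₀}^t K(t,s) x(s) ds + g(t) has exactly one continuous solution,
given by x(t) = g(t) + ∫_{t₀}^t R(t,s,λ) g(s) ds. -/
theorem volterra_second_kind_unique_solution
    (t₀ T : ℝ) (ht : t₀ < T)
    (K : ℝ → ℝ → ℝ)
    (hK : ContinuousOn (fun q : ℝ × ℝ => K q.1 q.2)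
      {q : ℝ × ℝ | t₀ ≤ q.2 ∧ q.2 ≤ q.1 ∧ q.1 ≤ T})
    (Kn : ℕ → ℝ → ℝ → ℝ)
    (hKn1 : ∀ t s, Kn 1 t s = K t s)
    (hKnrec : ∀ n, 2 ≤ n → ∀ t s, Kn n t s = ∫ z in s..t, K t z * Kn (n - 1) z s)
    (R : ℝ → ℝ → ℝ → ℝ)
    (hR : ∀ t s lam, R t s lam = ∑' n : ℕ, lam ^ (n + 1) * Kn (n + 1) t s)
    (lam : ℝ) (g : ℝ → ℝ) (hg : ContinuousOn g (Set.Icc t₀ T)) :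
    -- the formula x(t) = g(t) + ∫_{t₀}^t R(t,s,λ) g(s) ds is a continuous solution
    (ContinuousOn (fun t => g t + ∫ s in t₀..t, R t s lam * g s) (Set.Icc t₀ T) ∧
      ∀ t ∈ Set.Icc t₀ T,
        g t + ∫ s in t₀..t, R t s lam * g s =
          lam * (∫ s in t₀..t, K t s * (g s + ∫ z in t₀..s, R s z lam * g z)) + g t) ∧
    -- and any continuous solution coincides with it on [t₀,T]
    (∀ x : ℝ → ℝ, ContinuousOn x (Set.Icc t₀ T) →
      (∀ t ∈ Set.Icc t₀ T, x t = lam * (∫ s in t₀..t, K t s * x s) + g t) →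
      ∀ t ∈ Set.Icc t₀ T, x t = g t + ∫ s in t₀..t, R t s lam * g s) := by
  have htT : t₀ ≤ T := ht.le
  -- the clamping map onto [t₀, T]
  set c : ℝ → ℝ := fun u => max t₀ (min u T) with hcdef
  have hc_cont : Continuous c := continuous_const.max (continuous_id.min continuous_const)
  have hc_mem : ∀ u, c u ∈ Set.Icc t₀ T :=
    fun u => ⟨le_max_left _ _, max_le htT (min_le_right _ _)⟩
  have hc_id : ∀ u ∈ Set.Icc t₀ T, c u = u := by
    intro u hu
    simp only [hcdef]
    rw [min_eq_left hu.2, max_eq_right hu.1]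
  -- extended kernel
  set d : ℝ → ℝ → ℝ := fun t s => max t₀ (min s (c t)) with hddef
  set Kb : ℝ → ℝ → ℝ := fun t s => K (c t) (d t s) with hKbdef
  have hd_mem : ∀ t s, t₀ ≤ d t s ∧ d t s ≤ c t ∧ c t ≤ T := by
    intro t s
    exact ⟨le_max_left _ _, max_le (hc_mem t).1 (min_le_right _ _), (hc_mem t).2⟩
  have hKb_cont : Continuous fun p : ℝ × ℝ => Kb p.1 p.2 := by
    have : (fun p : ℝ × ℝ => Kb p.1 p.2) =
        (fun q : ℝ × ℝ => K q.1 q.2) ∘ (fun p : ℝ × ℝ => (c p.1, d p.1 p.2)) := rfl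
    rw [this]
    apply hK.comp_continuous
    · apply Continuous.prodMk (hc_cont.comp continuous_fst)
      exact continuous_const.max (continuous_snd.min (hc_cont.comp continuous_fst))
    · intro p
      exact ⟨(hd_mem p.1 p.2).1, (hd_mem p.1 p.2).2.1, (hd_mem p.1 p.2).2.2⟩
  have hKb_eq : ∀ t s, t₀ ≤ s → s ≤ t → t ≤ T → Kb t s = K t s := by
    intro t s h1 h2 h3
    have hct : c t = t := hc_id t ⟨le_trans h1 h2, h3⟩
    simp only [hKbdef, hddef, hct]
    rw [min_eq_left h2, max_eq_right h1]
  -- bound on the kernel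
  have htri_cpt : IsCompact {q : ℝ × ℝ | t₀ ≤ q.2 ∧ q.2 ≤ q.1 ∧ q.1 ≤ T} := by
    have heq : {q : ℝ × ℝ | t₀ ≤ q.2 ∧ q.2 ≤ q.1 ∧ q.1 ≤ T} =
        (Set.Icc t₀ T ×ˢ Set.Icc t₀ T) ∩ {q : ℝ × ℝ | q.2 ≤ q.1} := by
      ext q
      simp only [Set.mem_setOf_eq, Set.mem_inter_iff, Set.mem_prod, Set.mem_Icc]
      constructor
      · rintro ⟨a, b, e⟩; exact ⟨⟨⟨le_trans a b, e⟩, ⟨a, le_trans b e⟩⟩, b⟩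
      · rintro ⟨⟨⟨_, e⟩, ⟨a, _⟩⟩, b⟩; exact ⟨a, b, e⟩
    rw [heq]
    exact (isCompact_Icc.prod isCompact_Icc).inter_right
      (isClosed_le continuous_snd continuous_fst)
  obtain ⟨M0, hM0'⟩ := htri_cpt.exists_bound_of_continuousOn hK
  set M : ℝ := max M0 0 with hMdef
  have hM0 : (0:ℝ) ≤ M := le_max_right _ _
  have hM : ∀ t s, |Kb t s| ≤ M := by
    intro t s
    refine le_trans ?_ (le_max_left M0 0)
    exact hM0' (c t, d t s) ⟨(hd_mem t s).1, (hd_mem t s).2.1, (hd_mem t s).2.2⟩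
  set P : ℕ → ℝ → ℝ → ℝ := viterK Kb with hPdef
  have hP_cont : ∀ n, Continuous fun p : ℝ × ℝ => P n p.1 p.2 := viterK_cont hKb_cont
  have hP_bd : ∀ n t s, |P n t s| ≤ M ^ (n + 1) * |t - s| ^ n / n.factorial :=
    viterK_bound hKb_cont hM0 hM
  -- agreement with the iterated kernels on the triangle
  have hPKn : ∀ n, ∀ t s, t₀ ≤ s → s ≤ t → t ≤ T → P n t s = Kn (n + 1) t s := by
    intro n
    induction n with
    | zero =>
      intro t s h1 h2 h3
      rw [hKn1]
      exact hKb_eq t s h1 h2 h3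
    | succ n ih =>
      intro t s h1 h2 h3
      have hrec := hKnrec (n + 2) (by omega) t s
      have : n + 2 - 1 = n + 1 := rfl
      rw [this] at hrec
      show (∫ z in s..t, Kb t z * P n z s) = Kn (n + 2) t s
      rw [hrec]
      apply intervalIntegral.integral_congr
      intro z hz
      rw [Set.uIcc_of_le h2] at hz
      show Kb t z * P n z s = K t z * Kn (n + 1) z s
      rw [hKb_eq t z (le_trans h1 hz.1) hz.2 h3, ih z s h1 hz.1 (le_trans hz.2 h3)]
  -- the extended data
  set g' : ℝ → ℝ := fun u => g (c u) with hg'def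
  have hg'_cont : Continuous g' := hg.comp_continuous hc_cont hc_mem
  have hg'_eq : ∀ u ∈ Set.Icc t₀ T, g' u = g u := by
    intro u hu; simp only [hg'def]; rw [hc_id u hu]
  -- summable bound
  set u : ℕ → ℝ := fun n => |lam| ^ (n + 1) * (M ^ (n + 1) * (T - t₀) ^ n / n.factorial)
    with hudef
  have hu : Summable u := by
    apply ((Real.summable_pow_div_factorial (|lam| * M * (T - t₀))).mul_left (|lam| * M)).congr
    intro n
    simp only [hudef]
    have hfac : ((n.factorial : ℝ)) ≠ 0 := Nat.cast_ne_zero.mpr n.factorial_ne_zero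
    rw [mul_pow, mul_pow]
    field_simp
    ring
  have hPu : ∀ (n : ℕ) (a b : ℝ), a ∈ Set.Icc t₀ T → b ∈ Set.Icc t₀ T →
      ‖lam ^ (n + 1) * P n a b‖ ≤ u n := by
    intro n a b ha hb
    rw [Real.norm_eq_abs, abs_mul, abs_pow]
    simp only [hudef]
    apply mul_le_mul_of_nonneg_left _ (pow_nonneg (abs_nonneg _) _)
    refine le_trans (hP_bd n a b) ?_
    have habs : |a - b| ≤ T - t₀ := by
      rw [abs_sub_le_iff]
      constructor <;> [linarith [ha.2, hb.1]; linarith [hb.2, ha.1]]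
    gcongr
  -- the resolvent, extended
  set Rb : ℝ → ℝ → ℝ := fun t s => ∑' n : ℕ, lam ^ (n + 1) * P n (c t) (c s) with hRbdef
  have hsummable : ∀ t s, Summable fun n : ℕ => lam ^ (n + 1) * P n (c t) (c s) := by
    intro t s
    exact Summable.of_norm_bounded hu fun n => hPu n (c t) (c s) (hc_mem t) (hc_mem s)
  have hRb_cont : Continuous fun p : ℝ × ℝ => Rb p.1 p.2 := by
    apply continuous_tsum _ hu
    · intro n p
      exact hPu n (c p.1) (c p.2) (hc_mem p.1) (hc_mem p.2)
    · intro n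
      exact continuous_const.mul ((hP_cont n).comp
        ((hc_cont.comp continuous_fst).prodMk (hc_cont.comp continuous_snd)))
  have hRbR : ∀ t s, t₀ ≤ s → s ≤ t → t ≤ T → Rb t s = R t s lam := by
    intro t s h1 h2 h3
    rw [hR]
    simp only [hRbdef]
    rw [hc_id t ⟨le_trans h1 h2, h3⟩, hc_id s ⟨h1, le_trans h2 h3⟩]
    exact tsum_congr fun n => by rw [hPKn n t s h1 h2 h3]
  -- the candidate solution
  set X : ℝ → ℝ := fun t => g' t + ∫ s in t₀..t, Rb t s * g' s with hXdef
  have hX_cont : Continuous X := by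
    apply hg'_cont.add
    exact continuous_parametric_intervalIntegral_of_continuous
      (f := fun t s => Rb t s * g' s) (hRb_cont.mul (hg'_cont.comp continuous_snd))
      continuous_id
  have hXeq : ∀ t ∈ Set.Icc t₀ T, X t = g t + ∫ s in t₀..t, R t s lam * g s := by
    intro t htmem
    simp only [hXdef]
    rw [hg'_eq t htmem]
    congr 1
    apply intervalIntegral.integral_congr
    intro s hs
    rw [Set.uIcc_of_le htmem.1] at hs
    show Rb t s * g' s = R t s lam * g s
    rw [hRbR t s hs.1 hs.2 htmem.2, hg'_eq s ⟨hs.1, le_trans hs.2 htmem.2⟩]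
  -- the resolvent identity
  have hres : ∀ t z, t₀ ≤ z → z ≤ t → t ≤ T →
      Rb t z = lam * Kb t z + lam * ∫ s in z..t, Kb t s * Rb s z := by
    intro t z h1 h2 h3
    have htmem : t ∈ Set.Icc t₀ T := ⟨le_trans h1 h2, h3⟩
    have hzmem : z ∈ Set.Icc t₀ T := ⟨h1, le_trans h2 h3⟩
    have hsum' : Summable fun n : ℕ => lam ^ (n + 1) * P n t z := by
      have := hsummable t z
      rwa [hc_id t htmem, hc_id z hzmem] at this
    have hRbtz : Rb t z = ∑' n : ℕ, lam ^ (n + 1) * P n t z := by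
      simp only [hRbdef]; rw [hc_id t htmem, hc_id z hzmem]
    rw [hRbtz, Summable.tsum_eq_zero_add hsum']
    have hP0 : lam ^ (0 + 1) * P 0 t z = lam * Kb t z := by
      simp only [hPdef]; rw [pow_one]; rfl
    rw [hP0]
    congr 1
    -- now the series part
    have hhs : HasSum (fun n : ℕ => ∫ s in z..t, Kb t s * (lam ^ (n + 1) * P n s z))
        (∫ s in z..t, Kb t s * Rb s z) := by
      apply intervalIntegral.hasSum_integral_of_dominated_convergence
        (bound := fun n _ => M * u n)
      · intro n
        apply Continuous.aestronglyMeasurable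
        exact (hKb_cont.comp (continuous_const.prodMk continuous_id)).mul
          (continuous_const.mul ((hP_cont n).comp (continuous_id.prodMk continuous_const)))
      · intro n
        filter_upwards with s hs
        rw [Set.uIoc_of_le h2] at hs
        have hsmem : s ∈ Set.Icc t₀ T := ⟨le_trans h1 hs.1.le, le_trans hs.2 h3⟩
        rw [norm_mul]
        exact mul_le_mul (by rw [Real.norm_eq_abs]; exact hM t s)
          (hPu n s z hsmem hzmem) (norm_nonneg _) hM0
      · filter_upwards with s _
        exact hu.mul_left M
      · exact intervalIntegrable_const
      · filter_upwards with s hs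
        rw [Set.uIoc_of_le h2] at hs
        have hsmem : s ∈ Set.Icc t₀ T := ⟨le_trans h1 hs.1.le, le_trans hs.2 h3⟩
        have hsumz : Summable fun n : ℕ => lam ^ (n + 1) * P n s z := by
          have := hsummable s z
          rwa [hc_id s hsmem, hc_id z hzmem] at this
        have : Rb s z = ∑' n : ℕ, lam ^ (n + 1) * P n s z := by
          simp only [hRbdef]; rw [hc_id s hsmem, hc_id z hzmem]
        rw [this]
        exact hsumz.hasSum.mul_left (Kb t s)
    have hterm : ∀ n : ℕ, (∫ s in z..t, Kb t s * (lam ^ (n + 1) * P n s z)) =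
        lam ^ (n + 1) * P (n + 1) t z := by
      intro n
      have : (fun s => Kb t s * (lam ^ (n + 1) * P n s z)) =
          fun s => lam ^ (n + 1) * (Kb t s * P n s z) := by
        funext s; ring
      rw [this, intervalIntegral.integral_const_mul]
      rfl
    have hhs' : HasSum (fun n : ℕ => lam ^ (n + 1) * P (n + 1) t z)
        (∫ s in z..t, Kb t s * Rb s z) := by
      have := hhs
      simp_rw [hterm] at this
      exact this
    calc (∑' n : ℕ, lam ^ (n + 1 + 1) * P (n + 1) t z)
        = ∑' n : ℕ, lam * (lam ^ (n + 1) * P (n + 1) t z) := by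
          apply tsum_congr
          intro n
          rw [pow_succ]
          ring
      _ = lam * ∑' n : ℕ, lam ^ (n + 1) * P (n + 1) t z := by rw [tsum_mul_left]
      _ = lam * ∫ s in z..t, Kb t s * Rb s z := by rw [hhs'.tsum_eq]
  have hXsub : ∀ s, X s - g' s = ∫ z in t₀..s, Rb s z * g' z := by
    intro s; simp only [hXdef]; ring
  -- the solution property
  have hsol : ∀ t ∈ Set.Icc t₀ T,
      (∫ s in t₀..t, Rb t s * g' s) = lam * ∫ s in t₀..t, Kb t s * X s := by
    intro t htmem
    have hcont2 : Continuous fun s => Kb t s * g' s :=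
      (hKb_cont.comp (continuous_const.prodMk continuous_id)).mul hg'_cont
    have hcont3 : Continuous fun s => Kb t s * (X s - g' s) :=
      (hKb_cont.comp (continuous_const.prodMk continuous_id)).mul (hX_cont.sub hg'_cont)
    have hjoint : Continuous fun p : ℝ × ℝ => Kb t p.1 * (Rb p.1 p.2 * g' p.2) :=
      (hKb_cont.comp (continuous_const.prodMk continuous_fst)).mul
        ((hRb_cont.mul (hg'_cont.comp continuous_snd)))
    have hsplit : (∫ s in t₀..t, Kb t s * X s) =
        (∫ s in t₀..t, Kb t s * g' s) + ∫ s in t₀..t, Kb t s * (X s - g' s) := by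
      rw [← intervalIntegral.integral_add (hcont2.intervalIntegrable _ _)
        (hcont3.intervalIntegrable _ _)]
      apply intervalIntegral.integral_congr
      intro s _
      show Kb t s * X s = Kb t s * g' s + Kb t s * (X s - g' s)
      ring
    have h2 : (∫ s in t₀..t, Kb t s * (X s - g' s)) =
        ∫ z in t₀..t, (∫ s in z..t, Kb t s * Rb s z) * g' z := by
      calc (∫ s in t₀..t, Kb t s * (X s - g' s))
          = ∫ s in t₀..t, ∫ z in t₀..s, Kb t s * (Rb s z * g' z) := by
            apply intervalIntegral.integral_congr
            intro s _
            show Kb t s * (X s - g' s) = _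
            rw [hXsub s]
            exact (intervalIntegral.integral_const_mul _ _).symm
        _ = ∫ z in t₀..t, ∫ s in z..t, Kb t s * (Rb s z * g' z) :=
            vfubini_triangle htmem.1 _ hjoint
        _ = ∫ z in t₀..t, (∫ s in z..t, Kb t s * Rb s z) * g' z := by
            apply intervalIntegral.integral_congr
            intro z _
            show (∫ s in z..t, Kb t s * (Rb s z * g' z)) =
              (∫ s in z..t, Kb t s * Rb s z) * g' z
            rw [← intervalIntegral.integral_mul_const]
            apply intervalIntegral.integral_congr
            intro s _
            show Kb t s * (Rb s z * g' z) = Kb t s * Rb s z * g' z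
            ring
    have hinner_cont : Continuous fun z => ∫ s in z..t, Kb t s * Rb s z := by
      have hj : Continuous fun p : ℝ × ℝ => Kb t p.2 * Rb p.2 p.1 :=
        (hKb_cont.comp (continuous_const.prodMk continuous_snd)).mul
          (hRb_cont.comp (continuous_snd.prodMk continuous_fst))
      have h1 : Continuous fun z => ∫ s in t..z, Kb t s * Rb s z :=
        continuous_parametric_intervalIntegral_of_continuous
          (f := fun z s => Kb t s * Rb s z) hj continuous_id
      have heq : (fun z => ∫ s in z..t, Kb t s * Rb s z) =
          fun z => -∫ s in t..z, Kb t s * Rb s z := by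
        funext z
        exact intervalIntegral.integral_symm t z
      rw [heq]
      exact h1.neg
    calc (∫ s in t₀..t, Rb t s * g' s)
        = ∫ z in t₀..t, ((lam * Kb t z) * g' z +
            (lam * ∫ s in z..t, Kb t s * Rb s z) * g' z) := by
          apply intervalIntegral.integral_congr
          intro z hz
          rw [Set.uIcc_of_le htmem.1] at hz
          show Rb t z * g' z = _
          rw [hres t z hz.1 hz.2 htmem.2]
          ring
      _ = (∫ z in t₀..t, (lam * Kb t z) * g' z) +
            ∫ z in t₀..t, (lam * ∫ s in z..t, Kb t s * Rb s z) * g' z := by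
          apply intervalIntegral.integral_add
          · exact Continuous.intervalIntegrable (by
              exact ((continuous_const.mul (hKb_cont.comp
                (continuous_const.prodMk continuous_id))).mul hg'_cont)) _ _
          · exact Continuous.intervalIntegrable
              ((continuous_const.mul hinner_cont).mul hg'_cont) _ _
      _ = lam * (∫ s in t₀..t, Kb t s * g' s) +
            lam * ∫ s in t₀..t, Kb t s * (X s - g' s) := by
          congr 1
          · rw [← intervalIntegral.integral_const_mul]
            apply intervalIntegral.integral_congr
            intro z _
            show lam * Kb t z * g' z = lam * (Kb t z * g' z)
            ring
          · rw [h2, ← intervalIntegral.integral_const_mul]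
            apply intervalIntegral.integral_congr
            intro z _
            show (lam * ∫ s in z..t, Kb t s * Rb s z) * g' z =
              lam * ((∫ s in z..t, Kb t s * Rb s z) * g' z)
            ring
      _ = lam * ∫ s in t₀..t, Kb t s * X s := by rw [hsplit]; ring
  -- assemble part 1
  refine ⟨⟨?_, ?_⟩, ?_⟩
  · apply ContinuousOn.congr hX_cont.continuousOn
    intro t htmem
    exact (hXeq t htmem).symm
  · intro t htmem
    have e2 : (∫ s in t₀..t, K t s * (g s + ∫ z in t₀..s, R s z lam * g z)) =
        ∫ s in t₀..t, Kb t s * X s := by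
      apply intervalIntegral.integral_congr
      intro s hs
      rw [Set.uIcc_of_le htmem.1] at hs
      have hsmem : s ∈ Set.Icc t₀ T := ⟨hs.1, le_trans hs.2 htmem.2⟩
      show K t s * (g s + ∫ z in t₀..s, R s z lam * g z) = Kb t s * X s
      rw [hKb_eq t s hs.1 hs.2 htmem.2]
      congr 1
      exact (hXeq s hsmem).symm
    have e1 : (∫ s in t₀..t, R t s lam * g s) = ∫ s in t₀..t, Rb t s * g' s := by
      apply intervalIntegral.integral_congr
      intro s hs
      rw [Set.uIcc_of_le htmem.1] at hs
      show R t s lam * g s = Rb t s * g' s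
      rw [hRbR t s hs.1 hs.2 htmem.2, hg'_eq s ⟨hs.1, le_trans hs.2 htmem.2⟩]
    rw [e1, e2, hsol t htmem, add_comm]
  -- uniqueness
  · intro x hx hxeq t htmem
    set xc : ℝ → ℝ := fun u => x (c u) with hxcdef
    have hxc_cont : Continuous xc := hx.comp_continuous hc_cont hc_mem
    have hxc_eq : ∀ u ∈ Set.Icc t₀ T, xc u = x u := by
      intro u hu; simp only [hxcdef]; rw [hc_id u hu]
    set y : ℝ → ℝ := fun u => xc u - X u with hydef
    have hy_cont : Continuous y := hxc_cont.sub hX_cont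
    have hy_eq : ∀ τ ∈ Set.Icc t₀ T, y τ = lam * ∫ s in t₀..τ, Kb τ s * y s := by
      intro τ hτ
      have hXsol : X τ = lam * (∫ s in t₀..τ, Kb τ s * X s) + g' τ := by
        have : X τ = g' τ + ∫ s in t₀..τ, Rb τ s * g' s := rfl
        rw [this, hsol τ hτ, add_comm]
      have h1 : (∫ s in t₀..τ, K τ s * x s) = ∫ s in t₀..τ, Kb τ s * xc s := by
        apply intervalIntegral.integral_congr
        intro s hs
        rw [Set.uIcc_of_le hτ.1] at hs
        show K τ s * x s = Kb τ s * xc s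
        rw [hKb_eq τ s hs.1 hs.2 hτ.2, hxc_eq s ⟨hs.1, le_trans hs.2 hτ.2⟩]
      have hgg : g' τ = g τ := hg'_eq τ hτ
      have hKbXc : Continuous fun s => Kb τ s * xc s :=
        (hKb_cont.comp (continuous_const.prodMk continuous_id)).mul hxc_cont
      have hKbX : Continuous fun s => Kb τ s * X s :=
        (hKb_cont.comp (continuous_const.prodMk continuous_id)).mul hX_cont
      have : y τ = x τ - X τ := by simp only [hydef]; rw [hxc_eq τ hτ]
      rw [this, hxeq τ hτ, hXsol, h1, hgg]
      have hsub : (∫ s in t₀..τ, Kb τ s * xc s) - (∫ s in t₀..τ, Kb τ s * X s) =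
          ∫ s in t₀..τ, Kb τ s * y s := by
        rw [← intervalIntegral.integral_sub (hKbXc.intervalIntegrable _ _)
          (hKbX.intervalIntegrable _ _)]
        apply intervalIntegral.integral_congr
        intro s _
        show Kb τ s * xc s - Kb τ s * X s = Kb τ s * y s
        simp only [hydef]
        ring
      rw [← hsub]
      ring
    obtain ⟨C0, hC0⟩ := isCompact_Icc.exists_bound_of_continuousOn hy_cont.continuousOn
    set C : ℝ := max C0 0 with hCdef
    have hC0' : (0:ℝ) ≤ C := le_max_right _ _
    have hCb : ∀ s ∈ Set.Icc t₀ T, |y s| ≤ C := by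
      intro s hs
      exact le_trans (hC0 s hs) (le_max_left _ _)
    have claim : ∀ n : ℕ, ∀ τ ∈ Set.Icc t₀ T,
        |y τ| ≤ C * (|lam| * M) ^ n * (τ - t₀) ^ n / n.factorial := by
      intro n
      induction n with
      | zero =>
        intro τ hτ
        simpa using hCb τ hτ
      | succ n ih =>
        intro τ hτ
        have hcy : Continuous fun s => Kb τ s * y s :=
          (hKb_cont.comp (continuous_const.prodMk continuous_id)).mul hy_cont
        have hcc : (0:ℝ) ≤ M * (C * (|lam| * M) ^ n / n.factorial) := by positivity
        have hbd := vhelper1 hτ.1 hcc n (fun s => Kb τ s * y s)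
          (hcy.intervalIntegrable _ _) ?_
        · rw [hy_eq τ hτ, abs_mul]
          calc |lam| * |∫ s in t₀..τ, Kb τ s * y s|
              ≤ |lam| * (M * (C * (|lam| * M) ^ n / n.factorial) *
                  (τ - t₀) ^ (n + 1) / (n + 1)) := by
                exact mul_le_mul_of_nonneg_left hbd (abs_nonneg _)
            _ = C * (|lam| * M) ^ (n + 1) * (τ - t₀) ^ (n + 1) / (n + 1).factorial := by
                rw [Nat.factorial_succ, pow_succ]
                push_cast
                have h1 : ((n.factorial : ℝ)) ≠ 0 := Nat.cast_ne_zero.mpr n.factorial_ne_zero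
                have h2 : ((n : ℝ) + 1) ≠ 0 := by positivity
                field_simp
                ring
        · intro s hs
          have hsmem : s ∈ Set.Icc t₀ T := ⟨hs.1.le, le_trans hs.2 hτ.2⟩
          rw [abs_mul]
          calc |Kb τ s| * |y s|
              ≤ M * (C * (|lam| * M) ^ n * (s - t₀) ^ n / n.factorial) :=
                mul_le_mul (hM τ s) (ih s hsmem) (abs_nonneg _) hM0
            _ = M * (C * (|lam| * M) ^ n / n.factorial) * (s - t₀) ^ n := by ring
    have hzero : |y t| ≤ 0 := by
      have hlim : Filter.Tendsto (fun n : ℕ => C * ((|lam| * M * (t - t₀)) ^ n / n.factorial))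
          Filter.atTop (nhds 0) := by
        have := (Real.summable_pow_div_factorial (|lam| * M * (t - t₀))).tendsto_atTop_zero
        have h2 := this.const_mul C
        simpa using h2
      apply ge_of_tendsto hlim
      filter_upwards with n
      calc |y t| ≤ C * (|lam| * M) ^ n * (t - t₀) ^ n / n.factorial := claim n t htmem
        _ = C * ((|lam| * M * (t - t₀)) ^ n / n.factorial) := by
            rw [mul_pow, mul_pow]
            ring
    have hy0 : y t = 0 := abs_eq_zero.mp (le_antisymm hzero (abs_nonneg _))
    have : x t = X t := by
      have := hy0
      simp only [hydef] at this
      rw [hxc_eq t htmem] at this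
      linarith
    rw [this, hXeq t htmem]
end

section
/- If a continuous function x : [t₀,T] → ℝ solves the loaded Volterra integral equation, then its load vector c = (x(t₁), …, x(t_{m−1})) ∈ ℝ^{m−1} satisfies the linear system A(λ) c = d(λ), where A(λ)_{ij} = δ_{ij} + b_j(t_i,λ) (δ the Kronecker delta) and d(λ)_i = F(t_i,λ) for i,j = 1, …, m−1. -/
open MeasureTheory Matrix

open Set intervalIntegral


lemma lvie_tri_swap (u : ℝ → ℝ → ℝ) (hu : Continuous (Function.uncurry u)) {s t : ℝ}
    (hst : s ≤ t) :
    (∫ z in s..t, ∫ w in z..t, u w z) = ∫ w in s..t, ∫ z in s..w, u w z := by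
  have hfin : IsFiniteMeasure (volume.restrict (Set.Ioc s t)) := by
    constructor
    rw [Measure.restrict_apply_univ, Real.volume_Ioc]
    exact ENNReal.ofReal_lt_top
  -- the indicator function
  set v : ℝ → ℝ → ℝ := fun z w => Set.indicator (Set.Ioi z) (fun w => u w z) w with hv
  have hmeas : AEStronglyMeasurable (Function.uncurry v)
      ((volume.restrict (Set.Ioc s t)).prod (volume.restrict (Set.Ioc s t))) := by
    have : Function.uncurry v = Set.indicator {p : ℝ × ℝ | p.1 < p.2}
        (fun p => u p.2 p.1) := by
      ext p
      simp [Function.uncurry, v, Set.indicator_apply, Set.mem_Ioi]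
    rw [this]
    exact ((hu.comp continuous_swap).measurable.indicator
      (measurableSet_lt measurable_fst measurable_snd)).aestronglyMeasurable
  obtain ⟨M, hM⟩ := (isCompact_Icc (a := (s, s)) (b := (t, t))).exists_bound_of_continuousOn
    (hu.comp continuous_swap).continuousOn
  have hint : Integrable (Function.uncurry v)
      ((volume.restrict (Set.Ioc s t)).prod (volume.restrict (Set.Ioc s t))) := by
    refine ⟨hmeas, ?_⟩
    have hb : ∀ᵐ p ∂((volume.restrict (Set.Ioc s t)).prod (volume.restrict (Set.Ioc s t))),
        ‖Function.uncurry v p‖ ≤ |M| := by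
      rw [Measure.prod_restrict]
      filter_upwards [ae_restrict_mem (measurableSet_Ioc.prod measurableSet_Ioc)] with p hp
      rcases hp with ⟨h1, h2⟩
      have : ‖u p.2 p.1‖ ≤ M :=
        hM (p.1, p.2) ⟨⟨h1.1.le, h2.1.le⟩, ⟨h1.2, h2.2⟩⟩
      simp only [Function.uncurry, v, Set.indicator_apply]
      split
      · exact this.trans (le_abs_self M)
      · simp
    exact (hasFiniteIntegral_const (|M|)).mono' hb
  have key := integral_integral_swap hint
  have L1 : (∫ z in s..t, ∫ w in z..t, u w z)
      = ∫ z in Set.Ioc s t, ∫ w in Set.Ioc s t, v z w := by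
    rw [intervalIntegral.integral_of_le hst]
    refine setIntegral_congr_fun measurableSet_Ioc (fun z hz => ?_)
    rw [intervalIntegral.integral_of_le hz.2]
    rw [setIntegral_indicator measurableSet_Ioi, Set.Ioc_inter_Ioi,
      max_eq_right hz.1.le]
  have L2 : (∫ w in s..t, ∫ z in s..w, u w z)
      = ∫ w in Set.Ioc s t, ∫ z in Set.Ioc s t, v z w := by
    rw [intervalIntegral.integral_of_le hst]
    refine setIntegral_congr_fun measurableSet_Ioc (fun w hw => ?_)
    have h1 : (∫ z in Set.Ioc s t, v z w)
        = ∫ z in Set.Ioc s t, Set.indicator (Set.Iio w) (fun z => u w z) z := by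
      refine setIntegral_congr_fun measurableSet_Ioc (fun z _ => ?_)
      simp [v, Set.indicator_apply, Set.mem_Ioi, Set.mem_Iio]
    rw [h1, setIntegral_indicator measurableSet_Iio]
    have h2 : Set.Ioc s t ∩ Set.Iio w = Set.Ioo s w := by
      ext z
      constructor
      · rintro ⟨⟨hz1, _⟩, hz2⟩; exact ⟨hz1, hz2⟩
      · rintro ⟨hz1, hz2⟩; exact ⟨⟨hz1, (hz2.le.trans hw.2)⟩, hz2⟩
    rw [h2, ← integral_Ioc_eq_integral_Ioo, intervalIntegral.integral_of_le hw.1.le]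
  rw [L1, L2]
  exact key

noncomputable def Qit (Kt : ℝ → ℝ → ℝ) : ℕ → ℝ → ℝ → ℝ
  | 0 => Kt
  | n + 1 => fun t s => ∫ z in s..t, Qit Kt n t z * Kt z s

lemma Qit_cont {Kt : ℝ → ℝ → ℝ} (hKt : Continuous (Function.uncurry Kt)) :
    ∀ n, Continuous (Function.uncurry (Qit Kt n)) := by
  intro n
  induction n with
  | zero => exact hKt
  | succ n ih =>
    have hi : Continuous (Function.uncurry fun (p : ℝ × ℝ) (z : ℝ) =>
        Qit Kt n p.1 z * Kt z p.2) := by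
      apply Continuous.mul
      · exact ih.comp ((continuous_fst.fst).prodMk continuous_snd)
      · exact hKt.comp (continuous_snd.prodMk continuous_fst.snd)
    have h1 : Continuous fun p : ℝ × ℝ =>
        ∫ z in (0:ℝ)..p.1, Qit Kt n p.1 z * Kt z p.2 :=
      intervalIntegral.continuous_parametric_intervalIntegral_of_continuous hi continuous_fst
    have h2 : Continuous fun p : ℝ × ℝ =>
        ∫ z in (0:ℝ)..p.2, Qit Kt n p.1 z * Kt z p.2 :=
      intervalIntegral.continuous_parametric_intervalIntegral_of_continuous hi continuous_snd
    have : (Function.uncurry (Qit Kt (n+1))) = fun p : ℝ × ℝ =>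
        (∫ z in (0:ℝ)..p.1, Qit Kt n p.1 z * Kt z p.2)
          - ∫ z in (0:ℝ)..p.2, Qit Kt n p.1 z * Kt z p.2 := by
      funext p
      show Qit Kt (n+1) p.1 p.2 = _
      show (∫ z in p.2..p.1, Qit Kt n p.1 z * Kt z p.2) = _
      have hc : Continuous fun z => Qit Kt n p.1 z * Kt z p.2 :=
        (ih.comp ((continuous_const (y := p.1)).prodMk continuous_id)).mul
          (hKt.comp (continuous_id.prodMk (continuous_const (y := p.2))))
      rw [← intervalIntegral.integral_interval_sub_left
        (hc.intervalIntegrable _ _) (hc.intervalIntegrable _ _)]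
    rw [this]
    exact h1.sub h2

lemma Qit_bound {Kt : ℝ → ℝ → ℝ} (hKt : Continuous (Function.uncurry Kt)) {M : ℝ}
    (hM : ∀ t s, |Kt t s| ≤ M) :
    ∀ n t s, s ≤ t → |Qit Kt n t s| ≤ M ^ (n + 1) * (t - s) ^ n / n.factorial := by
  have hM0 : 0 ≤ M := le_trans (abs_nonneg _) (hM 0 0)
  intro n
  induction n with
  | zero => intro t s _; simpa [Qit] using hM t s
  | succ n ih =>
    intro t s hst
    have hcont : ∀ t', Continuous fun z => Qit Kt n t' z * Kt z s := fun t' =>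
      ((Qit_cont hKt n).comp ((continuous_const (y := t')).prodMk continuous_id)).mul
        (hKt.comp (continuous_id.prodMk (continuous_const (y := s))))
    have step1 : |Qit Kt (n+1) t s| ≤ ∫ z in s..t, |Qit Kt n t z| * |Kt z s| := by
      have := intervalIntegral.norm_integral_le_integral_norm
        (f := fun z => Qit Kt n t z * Kt z s) (μ := volume) hst
      simpa [Qit, abs_mul] using this
    have step2 : (∫ z in s..t, |Qit Kt n t z| * |Kt z s|)
        ≤ ∫ z in s..t, (M ^ (n + 1) * M / n.factorial) * (t - z) ^ n := by
      apply intervalIntegral.integral_mono_on hst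
      · exact (((Qit_cont hKt n).comp ((continuous_const (y := t)).prodMk
          continuous_id)).abs.mul ((hKt.comp (continuous_id.prodMk
          (continuous_const (y := s)))).abs)).intervalIntegrable _ _
      · exact (Continuous.intervalIntegrable (by continuity) _ _)
      · intro z hz
        have htz : (0:ℝ) ≤ t - z := sub_nonneg.2 hz.2
        have h1 : |Qit Kt n t z| ≤ M ^ (n + 1) * (t - z) ^ n / n.factorial :=
          ih t z hz.2
        have h2 : |Kt z s| ≤ M := hM z s
        calc |Qit Kt n t z| * |Kt z s| ≤ (M ^ (n + 1) * (t - z) ^ n / n.factorial) * M :=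
              mul_le_mul h1 h2 (abs_nonneg _) (div_nonneg (mul_nonneg
                (pow_nonneg hM0 _) (pow_nonneg htz _)) (Nat.cast_nonneg _))
          _ = (M ^ (n + 1) * M / n.factorial) * (t - z) ^ n := by ring
    have step3 : (∫ z in s..t, (M ^ (n + 1) * M / n.factorial) * (t - z) ^ n)
        = M ^ (n + 2) * (t - s) ^ (n + 1) / (n + 1).factorial := by
      rw [intervalIntegral.integral_const_mul]
      have : (∫ z in s..t, (t - z) ^ n) = (t - s) ^ (n + 1) / (n + 1) := by
        rw [intervalIntegral.integral_comp_sub_left (fun u => u ^ n) t]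
        simp [integral_pow]
      rw [this, Nat.factorial_succ]
      push_cast
      field_simp
      ring
    calc |Qit Kt (n+1) t s| ≤ _ := step1
      _ ≤ _ := step2
      _ = _ := step3

lemma Qit_comm {Kt : ℝ → ℝ → ℝ} (hKt : Continuous (Function.uncurry Kt)) :
    ∀ n {s t : ℝ}, s ≤ t →
      Qit Kt (n + 1) t s = ∫ z in s..t, Kt t z * Qit Kt n z s := by
  intro n
  induction n with
  | zero =>
    intro s t _
    show (∫ z in s..t, Qit Kt 0 t z * Kt z s) = _
    simp only [Qit]
  | succ n ih =>
    intro s t hst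
    show (∫ z in s..t, Qit Kt (n+1) t z * Kt z s) = _
    have e1 : (∫ z in s..t, Qit Kt (n+1) t z * Kt z s)
        = ∫ z in s..t, (∫ w in z..t, Kt t w * Qit Kt n w z) * Kt z s := by
      apply intervalIntegral.integral_congr
      intro z hz
      rw [Set.uIcc_of_le hst] at hz
      show Qit Kt (n+1) t z * Kt z s = _
      rw [ih hz.2]
    have e2 : (∫ z in s..t, (∫ w in z..t, Kt t w * Qit Kt n w z) * Kt z s)
        = ∫ z in s..t, ∫ w in z..t, Kt t w * Qit Kt n w z * Kt z s := by
      refine intervalIntegral.integral_congr (fun z _ => ?_)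
      rw [← intervalIntegral.integral_mul_const]
    have hu : Continuous (Function.uncurry
        (fun w z => Kt t w * Qit Kt n w z * Kt z s)) := by
      refine ((Continuous.mul ?_ ?_).mul ?_)
      · exact hKt.comp ((continuous_const (y := t)).prodMk continuous_fst)
      · exact Qit_cont hKt n
      · exact hKt.comp (continuous_snd.prodMk (continuous_const (y := s)))
    have e3 := lvie_tri_swap (fun w z => Kt t w * Qit Kt n w z * Kt z s) hu hst
    have e4 : (∫ w in s..t, ∫ z in s..w, Kt t w * Qit Kt n w z * Kt z s)
        = ∫ w in s..t, Kt t w * Qit Kt (n+1) w s := by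
      refine intervalIntegral.integral_congr (fun w _ => ?_)
      show _ = Kt t w * ∫ z in s..w, Qit Kt n w z * Kt z s
      rw [← intervalIntegral.integral_const_mul]
      refine intervalIntegral.integral_congr (fun z _ => by ring)
    rw [e1, e2, e3, e4]

lemma lvie_expansion {Kt : ℝ → ℝ → ℝ} (hKt : Continuous (Function.uncurry Kt))
    {t₀ T lam : ℝ} {X G : ℝ → ℝ} (hX : Continuous X) (hG : Continuous G)
    (heq : ∀ t ∈ Set.Icc t₀ T, X t = lam * (∫ s in t₀..t, Kt t s * X s) + G t) :
    ∀ N, ∀ t ∈ Set.Icc t₀ T, X t = G t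
      + (∑ n ∈ Finset.range N, lam ^ (n+1) * ∫ s in t₀..t, Qit Kt n t s * G s)
      + lam ^ (N+1) * ∫ s in t₀..t, Qit Kt N t s * X s := by
  have cQ : ∀ n (t' : ℝ), Continuous fun s => Qit Kt n t' s := fun n t' =>
    (Qit_cont hKt n).comp ((continuous_const (y := t')).prodMk continuous_id)
  have cK1 : ∀ (t' : ℝ), Continuous fun s => Kt t' s := fun t' =>
    hKt.comp ((continuous_const (y := t')).prodMk continuous_id)
  intro N
  induction N with
  | zero =>
    intro t ht
    have := heq t ht
    simp only [Finset.range_zero, Finset.sum_empty, add_zero, pow_one]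
    show X t = G t + lam ^ 1 * ∫ s in t₀..t, Kt t s * X s
    rw [pow_one, this]; ring
  | succ N ih =>
    intro t ht
    have key : (∫ s in t₀..t, Qit Kt N t s * X s)
        = (∫ s in t₀..t, Qit Kt N t s * G s)
          + lam * ∫ z in t₀..t, Qit Kt (N+1) t z * X z := by
      have h1 : (∫ s in t₀..t, Qit Kt N t s * X s)
          = ∫ s in t₀..t, (Qit Kt N t s * G s
            + lam * (Qit Kt N t s * ∫ z in t₀..s, Kt s z * X z)) := by
        refine intervalIntegral.integral_congr (fun s hs => ?_)
        rw [Set.uIcc_of_le ht.1] at hs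
        have := heq s ⟨hs.1, hs.2.trans ht.2⟩
        show Qit Kt N t s * X s = _
        rw [this]; ring
      have cInner : Continuous fun s => Qit Kt N t s * ∫ z in t₀..s, Kt s z * X z := by
        refine (cQ N t).mul ?_
        refine intervalIntegral.continuous_parametric_intervalIntegral_of_continuous
          ?_ continuous_id
        exact (hKt.mul (hX.comp continuous_snd))
      have h2 : (∫ s in t₀..t, (Qit Kt N t s * G s
            + lam * (Qit Kt N t s * ∫ z in t₀..s, Kt s z * X z)))
          = (∫ s in t₀..t, Qit Kt N t s * G s)
            + lam * ∫ s in t₀..t, Qit Kt N t s * ∫ z in t₀..s, Kt s z * X z := by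
        rw [intervalIntegral.integral_add (f := fun s => Qit Kt N t s * G s)
          (g := fun s => lam * (Qit Kt N t s * ∫ z in t₀..s, Kt s z * X z)) (((cQ N t).mul hG).intervalIntegrable _ _)
          ((continuous_const.mul cInner).intervalIntegrable _ _),
          intervalIntegral.integral_const_mul]
      have h3 : (∫ s in t₀..t, Qit Kt N t s * ∫ z in t₀..s, Kt s z * X z)
          = ∫ z in t₀..t, Qit Kt (N+1) t z * X z := by
        have e1 : (∫ s in t₀..t, Qit Kt N t s * ∫ z in t₀..s, Kt s z * X z)
            = ∫ s in t₀..t, ∫ z in t₀..s, Qit Kt N t s * (Kt s z * X z) := by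
          refine intervalIntegral.integral_congr (fun s _ => ?_)
          rw [← intervalIntegral.integral_const_mul]
        have hu : Continuous (Function.uncurry
            (fun w z => Qit Kt N t w * (Kt w z * X z))) := by
          refine Continuous.mul ?_ (Continuous.mul ?_ ?_)
          · exact (cQ N t).comp continuous_fst
          · exact hKt
          · exact hX.comp continuous_snd
        have e2 := lvie_tri_swap (fun w z => Qit Kt N t w * (Kt w z * X z)) hu ht.1
        have e3 : (∫ z in t₀..t, ∫ w in z..t, Qit Kt N t w * (Kt w z * X z))
            = ∫ z in t₀..t, Qit Kt (N+1) t z * X z := by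
          refine intervalIntegral.integral_congr (fun z _ => ?_)
          show _ = Qit Kt (N+1) t z * X z
          show _ = (∫ w in z..t, Qit Kt N t w * Kt w z) * X z
          rw [← intervalIntegral.integral_mul_const]
          refine intervalIntegral.integral_congr (fun w _ => by ring)
        rw [e1, ← e2, e3]
      rw [h1, h2, h3]
    rw [ih t ht, key, Finset.sum_range_succ]
    ring

lemma lvie_term_bound {Kt : ℝ → ℝ → ℝ} (hKt : Continuous (Function.uncurry Kt))
    {M : ℝ} (hM : ∀ t s, |Kt t s| ≤ M) {t₀ T lam : ℝ} {h : ℝ → ℝ} {B : ℝ}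
    (hB0 : 0 ≤ B) (hB : ∀ s ∈ Set.Icc t₀ T, |h s| ≤ B)
    {t : ℝ} (ht : t ∈ Set.Icc t₀ T) (n : ℕ) :
    |lam ^ (n+1) * ∫ s in t₀..t, Qit Kt n t s * h s|
      ≤ (|lam| * M * B * (T - t₀)) * ((|lam| * M * (T - t₀)) ^ n / n.factorial) := by
  have hM0 : 0 ≤ M := le_trans (abs_nonneg _) (hM 0 0)
  have hTt : 0 ≤ T - t₀ := sub_nonneg.2 (ht.1.trans ht.2)
  have hIb : ∀ s ∈ Set.uIoc t₀ t, ‖Qit Kt n t s * h s‖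
      ≤ M ^ (n+1) * (T - t₀) ^ n / n.factorial * B := by
    intro s hs
    rw [Set.uIoc_of_le ht.1] at hs
    rw [Real.norm_eq_abs, abs_mul]
    have h1 : |Qit Kt n t s| ≤ M ^ (n+1) * (t - s) ^ n / n.factorial :=
      Qit_bound hKt hM n t s hs.2
    have h2 : (t - s) ^ n ≤ (T - t₀) ^ n := by
      apply pow_le_pow_left₀ (sub_nonneg.2 hs.2)
      have := ht.2; have := hs.1; linarith
    have h3 : |Qit Kt n t s| ≤ M ^ (n+1) * (T - t₀) ^ n / n.factorial := by
      refine h1.trans ?_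
      gcongr
    exact mul_le_mul h3 (hB s ⟨hs.1.le, hs.2.trans ht.2⟩) (abs_nonneg _) (by positivity)
  have hIn : ‖∫ s in t₀..t, Qit Kt n t s * h s‖
      ≤ M ^ (n+1) * (T - t₀) ^ n / n.factorial * B * |t - t₀| :=
    intervalIntegral.norm_integral_le_of_norm_le_const hIb
  have habs : |t - t₀| ≤ T - t₀ := by
    rw [abs_of_nonneg (sub_nonneg.2 ht.1)]; linarith [ht.2]
  rw [abs_mul]
  calc |lam ^ (n+1)| * |∫ s in t₀..t, Qit Kt n t s * h s|
      ≤ |lam| ^ (n+1) * (M ^ (n+1) * (T - t₀) ^ n / n.factorial * B * (T - t₀)) := by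
        rw [abs_pow]
        refine mul_le_mul_of_nonneg_left ?_ (by positivity)
        refine hIn.trans ?_
        refine mul_le_mul_of_nonneg_left habs (by positivity)
    _ = (|lam| * M * B * (T - t₀)) * ((|lam| * M * (T - t₀)) ^ n / n.factorial) := by
        rw [mul_pow, mul_pow, pow_succ, pow_succ]
        field_simp

lemma lvie_summable_aux (r c : ℝ) : Summable (fun n : ℕ => c * (r ^ n / n.factorial)) :=
  (Real.summable_pow_div_factorial r).mul_left c

lemma lvie_rep {Kt : ℝ → ℝ → ℝ} (hKt : Continuous (Function.uncurry Kt))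
    {M : ℝ} (hM : ∀ t s, |Kt t s| ≤ M) {t₀ T lam : ℝ} {X G : ℝ → ℝ}
    (hX : Continuous X) (hG : Continuous G)
    {BX BG : ℝ} (hBX0 : 0 ≤ BX) (hBX : ∀ s ∈ Set.Icc t₀ T, |X s| ≤ BX)
    (hBG0 : 0 ≤ BG) (hBG : ∀ s ∈ Set.Icc t₀ T, |G s| ≤ BG)
    (heq : ∀ t ∈ Set.Icc t₀ T, X t = lam * (∫ s in t₀..t, Kt t s * X s) + G t) :
    ∀ t ∈ Set.Icc t₀ T,
      X t = G t + ∑' n : ℕ, lam ^ (n+1) * ∫ s in t₀..t, Qit Kt n t s * G s := by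
  intro t ht
  set term : ℕ → ℝ := fun n => lam ^ (n+1) * ∫ s in t₀..t, Qit Kt n t s * G s with hterm
  have hsum : Summable term := by
    refine Summable.of_norm_bounded (lvie_summable_aux (|lam| * M * (T - t₀))
      (|lam| * M * BG * (T - t₀))) (fun n => ?_)
    exact lvie_term_bound hKt hM hBG0 hBG ht n
  have htend1 : Filter.Tendsto (fun N => ∑ n ∈ Finset.range N, term n)
      Filter.atTop (nhds (∑' n, term n)) := hsum.hasSum.tendsto_sum_nat
  have htend2 : Filter.Tendsto
      (fun N => lam ^ (N+1) * ∫ s in t₀..t, Qit Kt N t s * X s)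
      Filter.atTop (nhds 0) := by
    apply squeeze_zero_norm (fun N => lvie_term_bound hKt hM hBX0 hBX ht N)
    exact (lvie_summable_aux (|lam| * M * (T - t₀))
      (|lam| * M * BX * (T - t₀))).tendsto_atTop_zero
  have hconst : Filter.Tendsto (fun _ : ℕ => X t) Filter.atTop
      (nhds (G t + ∑' n, term n + 0)) := by
    refine Filter.Tendsto.congr (f₁ := fun N => G t
      + (∑ n ∈ Finset.range N, term n)
      + lam ^ (N+1) * ∫ s in t₀..t, Qit Kt N t s * X s) ?_ ?_
    · intro N
      exact (lvie_expansion hKt hX hG heq N t ht).symm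
    · exact (tendsto_const_nhds.add htend1).add htend2
  have := tendsto_nhds_unique hconst tendsto_const_nhds
  rw [add_zero] at this
  exact this.symm

lemma lvie_interchange {Kt : ℝ → ℝ → ℝ} (hKt : Continuous (Function.uncurry Kt))
    {M : ℝ} (hM : ∀ t s, |Kt t s| ≤ M) {t₀ T lam : ℝ} {G : ℝ → ℝ}
    (hG : Continuous G) {BG : ℝ} (hBG0 : 0 ≤ BG)
    (hBG : ∀ s ∈ Set.Icc t₀ T, |G s| ≤ BG) {t : ℝ} (ht : t ∈ Set.Icc t₀ T) :
    (∑' n : ℕ, lam ^ (n+1) * ∫ s in t₀..t, Qit Kt n t s * G s)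
      = ∫ s in t₀..t, (∑' n : ℕ, lam ^ (n+1) * Qit Kt n t s) * G s := by
  have hM0 : 0 ≤ M := le_trans (abs_nonneg _) (hM 0 0)
  have hTt : 0 ≤ T - t₀ := sub_nonneg.2 (ht.1.trans ht.2)
  have hlam0 : (0:ℝ) ≤ |lam| := abs_nonneg _
  set μ : MeasureTheory.Measure ℝ := volume.restrict (Set.Ioc t₀ t) with hμ
  set F : ℕ → ℝ → ℝ := fun n s => lam ^ (n+1) * (Qit Kt n t s * G s) with hF
  have cF : ∀ n, Continuous (F n) := fun n =>
    continuous_const.mul ((((Qit_cont hKt n).comp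
      ((continuous_const (y := t)).prodMk continuous_id))).mul hG)
  have hF_int : ∀ n, Integrable (F n) μ := fun n => (cF n).integrableOn_Ioc
  have hF_bound : ∀ n, ∀ s ∈ Set.Ioc t₀ t, ‖F n s‖
      ≤ |lam| ^ (n+1) * (M ^ (n+1) * (T - t₀) ^ n / n.factorial * BG) := by
    intro n s hs
    rw [Real.norm_eq_abs, abs_mul, abs_mul, abs_pow]
    refine mul_le_mul_of_nonneg_left ?_ (by positivity)
    have h1 : |Qit Kt n t s| ≤ M ^ (n+1) * (t - s) ^ n / n.factorial :=
      Qit_bound hKt hM n t s hs.2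
    have h2 : (t - s) ^ n ≤ (T - t₀) ^ n := by
      apply pow_le_pow_left₀ (sub_nonneg.2 hs.2)
      have := ht.2; have := hs.1; linarith
    have h3 : |Qit Kt n t s| ≤ M ^ (n+1) * (T - t₀) ^ n / n.factorial :=
      h1.trans (by gcongr)
    exact mul_le_mul h3 (hBG s ⟨hs.1.le, hs.2.trans ht.2⟩) (abs_nonneg _) (by positivity)
  have hF_sum : Summable fun n => ∫ s, ‖F n s‖ ∂μ := by
    refine Summable.of_nonneg_of_le
      (fun n => integral_nonneg (fun s => norm_nonneg _))
      (fun n => ?_)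
      (lvie_summable_aux (|lam| * M * (T - t₀)) (|lam| * M * BG * (T - t₀)))
    have step : (∫ s, ‖F n s‖ ∂μ)
        ≤ ∫ _ , |lam| ^ (n+1) * (M ^ (n+1) * (T - t₀) ^ n / n.factorial * BG) ∂μ := by
      refine setIntegral_mono_on (hF_int n).norm (integrableOn_const ?_)
        measurableSet_Ioc (hF_bound n)
      rw [Real.volume_Ioc]; exact ENNReal.ofReal_ne_top
    refine step.trans ?_
    rw [setIntegral_const, measureReal_def, Real.volume_Ioc, smul_eq_mul,
      ENNReal.toReal_ofReal (sub_nonneg.2 ht.1)]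
    have habs : t - t₀ ≤ T - t₀ := by have := ht.2; linarith
    calc (t - t₀) * (|lam| ^ (n+1) * (M ^ (n+1) * (T - t₀) ^ n / n.factorial * BG))
        ≤ (T - t₀) * (|lam| ^ (n+1) * (M ^ (n+1) * (T - t₀) ^ n / n.factorial * BG)) := by
          refine mul_le_mul_of_nonneg_right habs (by positivity)
      _ = |lam| * M * BG * (T - t₀) * ((|lam| * M * (T - t₀)) ^ n / n.factorial) := by
          rw [mul_pow, mul_pow, pow_succ, pow_succ]
          field_simp
  have key := integral_tsum_of_summable_integral_norm hF_int hF_sum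
  have L : (∑' n : ℕ, lam ^ (n+1) * ∫ s in t₀..t, Qit Kt n t s * G s)
      = ∑' n, ∫ s, F n s ∂μ := by
    refine tsum_congr (fun n => ?_)
    rw [intervalIntegral.integral_of_le ht.1]
    exact (MeasureTheory.integral_const_mul (μ := μ) (lam ^ (n+1)) (fun s => Qit Kt n t s * G s)).symm
  have Rr : (∫ s in t₀..t, (∑' n : ℕ, lam ^ (n+1) * Qit Kt n t s) * G s)
      = ∫ s, (∑' n, F n s) ∂μ := by
    rw [intervalIntegral.integral_of_le ht.1]
    refine setIntegral_congr_fun measurableSet_Ioc (fun s _ => ?_)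
    rw [← tsum_mul_right]
    exact tsum_congr (fun n => by rw [hF]; ring)
  rw [L, Rr]
  exact key

/-- If a continuous x solves the LVIE, then its load vector c = (x(t₁),…,x(t_{m-1}))
satisfies the linear algebraic system A(λ) c = d(λ). -/
theorem lvie_load_vector_satisfies_slae
    (t₀ T : ℝ) (ht : t₀ < T) (m : ℕ) (hm : 2 ≤ m)
    (p : Fin (m - 1) → ℝ) (hpmono : StrictMono p)
    (hp : ∀ j, t₀ < p j ∧ p j < T)
    (f : ℝ → ℝ) (hf : ContinuousOn f (Set.Icc t₀ T))
    (a : Fin (m - 1) → ℝ → ℝ) (ha : ∀ j, ContinuousOn (a j) (Set.Icc t₀ T))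
    (K : ℝ → ℝ → ℝ)
    (hK : ContinuousOn (fun q : ℝ × ℝ => K q.1 q.2)
      {q : ℝ × ℝ | t₀ ≤ q.2 ∧ q.2 ≤ q.1 ∧ q.1 ≤ T})
    (lam : ℝ)
    (Kn : ℕ → ℝ → ℝ → ℝ)
    (hKn1 : ∀ t s, Kn 1 t s = K t s)
    (hKnrec : ∀ n, 2 ≤ n → ∀ t s, Kn n t s = ∫ z in s..t, K t z * Kn (n - 1) z s)
    (R : ℝ → ℝ → ℝ → ℝ)
    (hR : ∀ t s lam', R t s lam' = ∑' n : ℕ, lam' ^ (n + 1) * Kn (n + 1) t s)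
    (F : ℝ → ℝ → ℝ)
    (hF : ∀ t lam', F t lam' = f t + ∫ s in t₀..t, R t s lam' * f s)
    (b : Fin (m - 1) → ℝ → ℝ → ℝ)
    (hb : ∀ j t lam', b j t lam' = a j t + ∫ s in t₀..t, R t s lam' * a j s)
    (A : Matrix (Fin (m - 1)) (Fin (m - 1)) ℝ)
    (hA : ∀ i j, A i j = (if i = j then 1 else 0) + b j (p i) lam)
    (d : Fin (m - 1) → ℝ)
    (hd : ∀ i, d i = F (p i) lam)
    (x : ℝ → ℝ) (hx : ContinuousOn x (Set.Icc t₀ T))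
    (hsol : ∀ t ∈ Set.Icc t₀ T,
      x t + ∑ j, a j t * x (p j) = lam * (∫ s in t₀..t, K t s * x s) + f t) :
    A *ᵥ (fun j => x (p j)) = d := by
  have hT : t₀ ≤ T := ht.le
  -- the clamp onto [t₀, T]
  set cl : ℝ → ℝ := fun z => max t₀ (min z T) with hcl
  have cl_cont : Continuous cl := continuous_const.max (continuous_id.min continuous_const)
  have cl_mem : ∀ z, cl z ∈ Set.Icc t₀ T := fun z =>
    ⟨le_max_left _ _, max_le hT (min_le_right _ _)⟩
  have cl_eq : ∀ z ∈ Set.Icc t₀ T, cl z = z := fun z hz => by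
    rw [hcl]; simp only [min_eq_left hz.2, max_eq_right hz.1]
  -- the extended kernel
  set Kt : ℝ → ℝ → ℝ := fun t s => K (max (cl s) (min t T)) (cl s) with hKtdef
  have hmapsto : ∀ q : ℝ × ℝ, ((max (cl q.2) (min q.1 T), cl q.2) : ℝ × ℝ)
      ∈ {q : ℝ × ℝ | t₀ ≤ q.2 ∧ q.2 ≤ q.1 ∧ q.1 ≤ T} := by
    intro q
    refine ⟨le_max_left _ _, le_max_left _ _, max_le (max_le hT (min_le_right _ _))
      (min_le_right _ _)⟩
  have hKtc : Continuous (Function.uncurry Kt) := by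
    have : Function.uncurry Kt = (fun q : ℝ × ℝ => K q.1 q.2)
        ∘ (fun q : ℝ × ℝ => (max (cl q.2) (min q.1 T), cl q.2)) := rfl
    rw [this]
    exact hK.comp_continuous (by fun_prop) hmapsto
  have hKt_eq : ∀ t s, t₀ ≤ s → s ≤ t → t ≤ T → Kt t s = K t s := by
    intro t s h1 h2 h3
    have hcs : cl s = s := cl_eq s ⟨h1, h2.trans h3⟩
    rw [hKtdef]
    simp only [hcs, min_eq_left h3, max_eq_right h2]
  -- global bound for the extended kernel
  obtain ⟨M, hMb⟩ := IsCompact.exists_bound_of_continuousOn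
    (isCompact_Icc (a := ((t₀ : ℝ), (t₀ : ℝ))) (b := (T, T))) hKtc.continuousOn
  have hM : ∀ t s, |Kt t s| ≤ M := by
    intro t s
    have h1 : t₀ ≤ cl s := (cl_mem s).1
    have h2 : cl s ≤ T := (cl_mem s).2
    have h3 : cl s ≤ max (cl s) (min t T) := le_max_left _ _
    have h4 : max (cl s) (min t T) ≤ T := max_le h2 (min_le_right _ _)
    have heqv : Kt t s = Kt (max (cl s) (min t T)) (cl s) := by
      rw [hKt_eq _ _ h1 h3 h4]
    rw [heqv]
    have := hMb (max (cl s) (min t T), cl s) ⟨⟨h1.trans h3, h1⟩, ⟨h4, h2⟩⟩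
    simpa [Function.uncurry, Real.norm_eq_abs] using this
  -- extensions of the data functions
  have getB : ∀ h : ℝ → ℝ, Continuous h →
      ∃ B, 0 ≤ B ∧ ∀ s ∈ Set.Icc t₀ T, |h s| ≤ B := by
    intro h hc
    obtain ⟨B, hB⟩ := (isCompact_Icc (a := t₀) (b := T)).exists_bound_of_continuousOn
      hc.continuousOn
    have h0 : |h t₀| ≤ B := by simpa [Real.norm_eq_abs] using hB t₀ ⟨le_refl _, hT⟩
    exact ⟨B, le_trans (abs_nonneg _) h0, fun s hs => by
      simpa [Real.norm_eq_abs] using hB s hs⟩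
  have ext_cont : ∀ h : ℝ → ℝ, ContinuousOn h (Set.Icc t₀ T) → Continuous (h ∘ cl) :=
    fun h hc => hc.comp_continuous cl_cont cl_mem
  have ext_eq : ∀ (h : ℝ → ℝ) (z : ℝ), z ∈ Set.Icc t₀ T → (h ∘ cl) z = h z :=
    fun h z hz => by simp [Function.comp, cl_eq z hz]
  set c : Fin (m - 1) → ℝ := fun j => x (p j) with hc
  set X : ℝ → ℝ := x ∘ cl with hX
  set Ff : ℝ → ℝ := f ∘ cl with hFf
  set Aa : Fin (m - 1) → ℝ → ℝ := fun j => (a j) ∘ cl with hAa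
  set G : ℝ → ℝ := fun z => Ff z - ∑ j, Aa j z * c j with hG
  have hXc : Continuous X := ext_cont x hx
  have hFfc : Continuous Ff := ext_cont f hf
  have hAac : ∀ j, Continuous (Aa j) := fun j => ext_cont (a j) (ha j)
  have hGc : Continuous G := by
    apply hFfc.sub
    exact continuous_finset_sum _ (fun j _ => (hAac j).mul continuous_const)
  obtain ⟨BX, hBX0, hBX⟩ := getB X hXc
  obtain ⟨BG, hBG0, hBG⟩ := getB G hGc
  obtain ⟨Bf, hBf0, hBf⟩ := getB Ff hFfc
  have hBa : ∀ j, ∃ B, 0 ≤ B ∧ ∀ s ∈ Set.Icc t₀ T, |Aa j s| ≤ B :=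
    fun j => getB (Aa j) (hAac j)
  -- the integral equation for the extended functions
  have heq : ∀ t ∈ Set.Icc t₀ T, X t = lam * (∫ s in t₀..t, Kt t s * X s) + G t := by
    intro t htt
    have h1 := hsol t htt
    have h2 : (∫ s in t₀..t, Kt t s * X s) = ∫ s in t₀..t, K t s * x s := by
      refine intervalIntegral.integral_congr (fun s hs => ?_)
      rw [Set.uIcc_of_le htt.1] at hs
      have hs' : s ∈ Set.Icc t₀ T := ⟨hs.1, hs.2.trans htt.2⟩
      show Kt t s * X s = K t s * x s
      rw [hKt_eq t s hs.1 hs.2 htt.2, hX, ext_eq x s hs']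
    have h3 : X t = x t := ext_eq x t htt
    have h4 : G t = f t - ∑ j, a j t * c j := by
      simp only [hG]
      have : Ff t = f t := ext_eq f t htt
      rw [this]
      congr 1
      refine Finset.sum_congr rfl (fun j _ => ?_)
      rw [hAa]
      simp only [ext_eq (a j) t htt]
    rw [h2, h3, h4]
    linarith [h1]
  -- iterated kernels agree on the triangle
  have hQeq : ∀ n, ∀ t s, t₀ ≤ s → s ≤ t → t ≤ T → Kn (n + 1) t s = Qit Kt n t s := by
    intro n
    induction n with
    | zero =>
      intro t s h1 h2 h3
      rw [hKn1]
      exact (hKt_eq t s h1 h2 h3).symm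
    | succ n ih =>
      intro t s h1 h2 h3
      rw [hKnrec (n + 2) (by omega) t s]
      have : (n + 2) - 1 = n + 1 := rfl
      rw [this]
      have e1 : (∫ z in s..t, K t z * Kn (n + 1) z s)
          = ∫ z in s..t, Kt t z * Qit Kt n z s := by
        refine intervalIntegral.integral_congr (fun z hz => ?_)
        rw [Set.uIcc_of_le h2] at hz
        show K t z * Kn (n+1) z s = Kt t z * Qit Kt n z s
        rw [hKt_eq t z (h1.trans hz.1) hz.2 h3, ih z s h1 hz.1 (hz.2.trans h3)]
      rw [e1, ← Qit_comm hKtc n h2]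
  -- resolvent identity on the triangle
  have hReq : ∀ t s, t₀ ≤ s → s ≤ t → t ≤ T →
      R t s lam = ∑' n : ℕ, lam ^ (n + 1) * Qit Kt n t s := by
    intro t s h1 h2 h3
    rw [hR]
    exact tsum_congr (fun n => by rw [hQeq n t s h1 h2 h3])
  -- the resolvent-applied integral for an admissible data function
  have hres : ∀ (h : ℝ → ℝ), ContinuousOn h (Set.Icc t₀ T) →
      ∀ {B : ℝ}, 0 ≤ B → (∀ s ∈ Set.Icc t₀ T, |(h ∘ cl) s| ≤ B) →
      ∀ t ∈ Set.Icc t₀ T,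
      (∫ s in t₀..t, R t s lam * h s)
        = ∑' n : ℕ, lam ^ (n+1) * ∫ s in t₀..t, Qit Kt n t s * (h ∘ cl) s := by
    intro h hhc B hB0 hB t htt
    have e1 : (∫ s in t₀..t, R t s lam * h s)
        = ∫ s in t₀..t, (∑' n : ℕ, lam ^ (n + 1) * Qit Kt n t s) * (h ∘ cl) s := by
      refine intervalIntegral.integral_congr (fun s hs => ?_)
      rw [Set.uIcc_of_le htt.1] at hs
      show R t s lam * h s = _
      rw [hReq t s hs.1 hs.2 htt.2, ext_eq h s ⟨hs.1, hs.2.trans htt.2⟩]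
    rw [e1]
    exact (lvie_interchange hKtc hM (ext_cont h hhc) hB0 hB htt).symm
  -- the main representation
  have hrep := lvie_rep hKtc hM hXc hGc hBX0 hBX hBG0 hBG heq
  -- evaluate at the load points
  have hload : ∀ i, x (p i) + ∑ j, b j (p i) lam * c j = F (p i) lam := by
    intro i
    have hpi : p i ∈ Set.Icc t₀ T := ⟨(hp i).1.le, (hp i).2.le⟩
    set ti := p i with hti
    -- split the tsum term
    have cQ : ∀ n, Continuous fun s => Qit Kt n ti s :=
      fun n => (Qit_cont hKtc n).comp ((continuous_const (y := ti)).prodMk continuous_id)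
    have hsplit : ∀ n, (∫ s in t₀..ti, Qit Kt n ti s * G s)
        = (∫ s in t₀..ti, Qit Kt n ti s * Ff s)
          - ∑ j, c j * ∫ s in t₀..ti, Qit Kt n ti s * Aa j s := by
      intro n
      have e1 : (∫ s in t₀..ti, Qit Kt n ti s * G s)
          = ∫ s in t₀..ti, (Qit Kt n ti s * Ff s
              - ∑ j, c j * (Qit Kt n ti s * Aa j s)) := by
        refine intervalIntegral.integral_congr (fun s _ => ?_)
        show Qit Kt n ti s * G s = _
        simp only [hG]
        rw [mul_sub, Finset.mul_sum]
        congr 1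
        exact Finset.sum_congr rfl (fun j _ => by ring)
      rw [e1, intervalIntegral.integral_sub (f := fun s => Qit Kt n ti s * Ff s)
        (g := fun s => ∑ j, c j * (Qit Kt n ti s * Aa j s)) (((cQ n).mul hFfc).intervalIntegrable _ _)
        (Continuous.intervalIntegrable (continuous_finset_sum _
          (fun j _ => continuous_const.mul (((cQ n)).mul (hAac j)))) _ _),
        intervalIntegral.integral_finset_sum (f := fun j s => c j * (Qit Kt n ti s * Aa j s))
          (fun j _ => (continuous_const.mul ((cQ n).mul (hAac j))).intervalIntegrable _ _)]
      congr 1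
      exact Finset.sum_congr rfl (fun j _ => by
        rw [intervalIntegral.integral_const_mul])
    -- summability of the pieces
    have hsumf : Summable (fun n => lam ^ (n+1) * ∫ s in t₀..ti, Qit Kt n ti s * Ff s) := by
      refine Summable.of_norm_bounded (lvie_summable_aux (|lam| * M * (T - t₀))
        (|lam| * M * Bf * (T - t₀))) (fun n => ?_)
      exact lvie_term_bound hKtc hM hBf0 hBf hpi n
    have hsuma : ∀ j, Summable
        (fun n => lam ^ (n+1) * ∫ s in t₀..ti, Qit Kt n ti s * Aa j s) := by
      intro j
      obtain ⟨B, hB0, hB⟩ := hBa j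
      refine Summable.of_norm_bounded (lvie_summable_aux (|lam| * M * (T - t₀))
        (|lam| * M * B * (T - t₀))) (fun n => ?_)
      exact lvie_term_bound hKtc hM hB0 hB hpi n
    -- compute the tsum
    have hts : (∑' n : ℕ, lam ^ (n+1) * ∫ s in t₀..ti, Qit Kt n ti s * G s)
        = (∑' n : ℕ, lam ^ (n+1) * ∫ s in t₀..ti, Qit Kt n ti s * Ff s)
          - ∑ j, c j * ∑' n : ℕ, lam ^ (n+1) * ∫ s in t₀..ti, Qit Kt n ti s * Aa j s := by
      have e0 : (fun n : ℕ => lam ^ (n+1) * ∫ s in t₀..ti, Qit Kt n ti s * G s)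
          = fun n => (lam ^ (n+1) * ∫ s in t₀..ti, Qit Kt n ti s * Ff s)
            - ∑ j, c j * (lam ^ (n+1) * ∫ s in t₀..ti, Qit Kt n ti s * Aa j s) := by
        funext n
        rw [hsplit n, mul_sub, Finset.mul_sum]
        congr 1
        exact Finset.sum_congr rfl (fun j _ => by ring)
      rw [e0]
      rw [Summable.tsum_sub hsumf (summable_sum (fun j _ => (hsuma j).mul_left (c j)))]
      congr 1
      rw [Summable.tsum_finsetSum (fun j _ => (hsuma j).mul_left (c j))]
      exact Finset.sum_congr rfl (fun j _ => tsum_mul_left)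
    -- identify the pieces with F and b
    have hFeq : (∑' n : ℕ, lam ^ (n+1) * ∫ s in t₀..ti, Qit Kt n ti s * Ff s)
        = F ti lam - f ti := by
      rw [hF ti lam, hres f hf hBf0 hBf ti hpi]
      ring
    have hbeq : ∀ j, (∑' n : ℕ, lam ^ (n+1) * ∫ s in t₀..ti, Qit Kt n ti s * Aa j s)
        = b j ti lam - a j ti := by
      intro j
      obtain ⟨B, hB0, hB⟩ := hBa j
      rw [hb j ti lam, hres (a j) (ha j) hB0 hB ti hpi]
      ring
    -- combine
    have hXg := hrep ti hpi
    have hX1 : X ti = x ti := ext_eq x ti hpi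
    have hG1 : G ti = f ti - ∑ j, a j ti * c j := by
      simp only [hG]
      have h5 : Ff ti = f ti := ext_eq f ti hpi
      rw [h5]
      congr 1
      exact Finset.sum_congr rfl (fun j _ => by rw [hAa]; simp only [ext_eq (a j) ti hpi])
    rw [hX1, hG1, hts, hFeq] at hXg
    have hsum_b : (∑ j, c j * (b j ti lam - a j ti))
        = ∑ j, c j * ∑' n : ℕ, lam ^ (n+1) * ∫ s in t₀..ti, Qit Kt n ti s * Aa j s :=
      Finset.sum_congr rfl (fun j _ => by rw [hbeq j])
    rw [← hsum_b] at hXg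
    have expand : (∑ j, c j * (b j ti lam - a j ti))
        = (∑ j, b j ti lam * c j) - ∑ j, a j ti * c j := by
      rw [← Finset.sum_sub_distrib]
      exact Finset.sum_congr rfl (fun j _ => by ring)
    rw [expand] at hXg
    have : x ti = F ti lam - ∑ j, b j ti lam * c j := by linarith
    linarith
  -- assemble the matrix identity
  funext i
  show ∑ j, A i j * c j = d i
  rw [hd i]
  have e1 : ∀ j, A i j * c j = (if i = j then 1 else 0) * c j + b j (p i) lam * c j := by
    intro j; rw [hA i j]; ring
  rw [Finset.sum_congr rfl (fun j _ => e1 j), Finset.sum_add_distrib]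
  have e2 : (∑ j, (if i = j then 1 else 0) * c j) = c i := by
    simp [ite_mul]
  rw [e2]
  exact hload i
end

section
/- If a vector c = (c₁, …, c_{m−1}) ∈ ℝ^{m−1} satisfies the linear system A(λ) c = d(λ), then the function x(t) := F(t,λ) − Σ_{j=1}^{m−1} b_j(t,λ) c_j is a continuous solution of the loaded Volterra integral equation, and moreover x(t_j) = c_j for j = 1, …, m−1. -/
section LVIEAux

open MeasureTheory intervalIntegral

noncomputable def iterK (Kb : ℝ → ℝ → ℝ) : ℕ → ℝ → ℝ → ℝ
  | 0 => Kb
  | n+1 => fun t s => ∫ z in s..t, Kb t z * iterK Kb n z s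

lemma iterK_cont {Kb : ℝ → ℝ → ℝ} (h : Continuous fun p : ℝ × ℝ => Kb p.1 p.2) :
    ∀ n, Continuous fun p : ℝ × ℝ => iterK Kb n p.1 p.2 := by
  intro n
  induction n with
  | zero => exact h
  | succ n ih =>
    have hint : Continuous (Function.uncurry fun (p : ℝ × ℝ) (z : ℝ) => Kb p.1 z * iterK Kb n z p.2) := by
      have c1 : Continuous fun q : (ℝ × ℝ) × ℝ => (q.1.1, q.2) :=
        (continuous_fst.fst).prodMk continuous_snd
      have c2 : Continuous fun q : (ℝ × ℝ) × ℝ => (q.2, q.1.2) :=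
        continuous_snd.prodMk continuous_fst.snd
      exact (h.comp c1).mul (ih.comp c2)
    have h1 : Continuous fun p : ℝ × ℝ => ∫ z in (0:ℝ)..p.1, Kb p.1 z * iterK Kb n z p.2 :=
      continuous_parametric_intervalIntegral_of_continuous hint continuous_fst
    have h2 : Continuous fun p : ℝ × ℝ => ∫ z in (0:ℝ)..p.2, Kb p.1 z * iterK Kb n z p.2 :=
      continuous_parametric_intervalIntegral_of_continuous hint continuous_snd
    have heq : (fun p : ℝ × ℝ => iterK Kb (n+1) p.1 p.2)
        = fun p : ℝ × ℝ => (∫ z in (0:ℝ)..p.1, Kb p.1 z * iterK Kb n z p.2)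
          - ∫ z in (0:ℝ)..p.2, Kb p.1 z * iterK Kb n z p.2 := by
      funext p
      have hI : ∀ u v : ℝ, IntervalIntegrable (fun z => Kb p.1 z * iterK Kb n z p.2) volume u v := by
        intro u v
        apply Continuous.intervalIntegrable
        exact hint.comp ((continuous_const.prodMk continuous_id) :
          Continuous fun z : ℝ => ((p, z) : (ℝ × ℝ) × ℝ))
      show (∫ z in p.2..p.1, Kb p.1 z * iterK Kb n z p.2) = _
      rw [intervalIntegral.integral_interval_sub_left (hI 0 p.1) (hI 0 p.2)]
    rw [heq]
    exact h1.sub h2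

lemma iterK_cont' {Kb : ℝ → ℝ → ℝ} (h : Continuous fun p : ℝ × ℝ => Kb p.1 p.2) (n : ℕ) (t : ℝ) :
    Continuous fun s => iterK Kb n t s :=
  (iterK_cont h n).comp (continuous_const.prodMk continuous_id)


lemma pow_int_eq (u v : ℝ) (n : ℕ) (huv : u ≤ v) :
    (∫ z in u..v, (z - u) ^ n) = (v - u) ^ (n+1) / (n+1) := by
  rw [intervalIntegral.integral_comp_sub_right (fun z => z ^ n) u]
  simp [integral_pow]

lemma pow_int_eq' (u v : ℝ) (n : ℕ) (huv : u ≤ v) :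
    (∫ z in u..v, (v - z) ^ n) = (v - u) ^ (n+1) / (n+1) := by
  rw [intervalIntegral.integral_comp_sub_left (fun z => z ^ n) v]
  simp [integral_pow]

lemma iterK_bound {Kb : ℝ → ℝ → ℝ} {M : ℝ} (hM0 : 0 ≤ M) (hM : ∀ t s, |Kb t s| ≤ M)
    (h : Continuous fun p : ℝ × ℝ => Kb p.1 p.2) :
    ∀ n t s, |iterK Kb n t s| ≤ M ^ (n+1) * |t - s| ^ n / n.factorial := by
  intro n
  induction n with
  | zero => intro t s; simpa [iterK] using hM t s
  | succ n ih =>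
    intro t s
    have hcont : Continuous fun z => Kb t z * iterK Kb n z s := by
      have c1 : Continuous fun z : ℝ => ((t, z) : ℝ × ℝ) := continuous_const.prodMk continuous_id
      have c2 : Continuous fun z : ℝ => ((z, s) : ℝ × ℝ) := continuous_id.prodMk continuous_const
      exact (h.comp c1).mul ((iterK_cont h n).comp c2)
    have hfact : ((n+1).factorial : ℝ) = (n+1) * n.factorial := by
      rw [Nat.factorial_succ]; push_cast; ring
    have hbnd : ∀ z, |Kb t z * iterK Kb n z s| ≤ M ^ (n+2) / n.factorial * |z - s| ^ n := by
      intro z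
      rw [abs_mul]
      calc |Kb t z| * |iterK Kb n z s| ≤ M * (M ^ (n+1) * |z - s| ^ n / n.factorial) := by
            apply mul_le_mul (hM t z) (ih z s) (abs_nonneg _) hM0
        _ = M ^ (n+2) / n.factorial * |z - s| ^ n := by ring
    rcases le_total s t with hst | hst
    · have h1 : |iterK Kb (n+1) t s| ≤ ∫ z in s..t, |Kb t z * iterK Kb n z s| := by
        have := intervalIntegral.norm_integral_le_integral_norm (f := fun z => Kb t z * iterK Kb n z s) (μ := volume) hst
        simp only [Real.norm_eq_abs] at this
        exact this
      have h2 : (∫ z in s..t, |Kb t z * iterK Kb n z s|)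
          ≤ ∫ z in s..t, M ^ (n+2) / n.factorial * (z - s) ^ n := by
        apply intervalIntegral.integral_mono_on hst (hcont.abs.intervalIntegrable _ _)
          ((by fun_prop : Continuous fun z : ℝ => M ^ (n+2) / n.factorial * (z - s) ^ n).intervalIntegrable _ _)
        intro z hz
        have : |z - s| = z - s := abs_of_nonneg (by linarith [hz.1])
        calc |Kb t z * iterK Kb n z s| ≤ M ^ (n+2) / n.factorial * |z - s| ^ n := hbnd z
          _ = M ^ (n+2) / n.factorial * (z - s) ^ n := by rw [this]
      have h3 : (∫ z in s..t, M ^ (n+2) / n.factorial * (z - s) ^ n)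
          = M ^ (n+2) * (t - s) ^ (n+1) / (n+1).factorial := by
        rw [intervalIntegral.integral_const_mul, pow_int_eq s t n hst, hfact]
        rw [div_mul_div_comm]
        rw [mul_comm ((n:ℝ)+1) (n.factorial:ℝ)]
      have habs : |t - s| = t - s := abs_of_nonneg (by linarith)
      calc |iterK Kb (n+1) t s| ≤ _ := le_trans h1 (le_trans h2 (le_of_eq h3))
        _ = M ^ (n+2) * |t - s| ^ (n+1) / (n+1).factorial := by rw [habs]
    · have h1 : |iterK Kb (n+1) t s| ≤ ∫ z in t..s, |Kb t z * iterK Kb n z s| := by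
        have h0 := intervalIntegral.norm_integral_le_integral_norm (f := fun z => Kb t z * iterK Kb n z s) (μ := volume) hst
        simp only [Real.norm_eq_abs] at h0
        calc |iterK Kb (n+1) t s| = |∫ z in t..s, Kb t z * iterK Kb n z s| := by
              rw [show iterK Kb (n+1) t s = ∫ z in s..t, Kb t z * iterK Kb n z s from rfl,
                intervalIntegral.integral_symm, abs_neg]
          _ ≤ _ := h0
      have h2 : (∫ z in t..s, |Kb t z * iterK Kb n z s|)
          ≤ ∫ z in t..s, M ^ (n+2) / n.factorial * (s - z) ^ n := by
        apply intervalIntegral.integral_mono_on hst (hcont.abs.intervalIntegrable _ _)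
          ((by fun_prop : Continuous fun z : ℝ => M ^ (n+2) / n.factorial * (s - z) ^ n).intervalIntegrable _ _)
        intro z hz
        have : |z - s| = s - z := by rw [abs_sub_comm]; exact abs_of_nonneg (by linarith [hz.2])
        calc |Kb t z * iterK Kb n z s| ≤ M ^ (n+2) / n.factorial * |z - s| ^ n := hbnd z
          _ = M ^ (n+2) / n.factorial * (s - z) ^ n := by rw [this]
      have h3 : (∫ z in t..s, M ^ (n+2) / n.factorial * (s - z) ^ n)
          = M ^ (n+2) * (s - t) ^ (n+1) / (n+1).factorial := by
        rw [intervalIntegral.integral_const_mul, pow_int_eq' t s n hst, hfact]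
        rw [div_mul_div_comm]
        rw [mul_comm ((n:ℝ)+1) (n.factorial:ℝ)]
      have habs : |t - s| = s - t := by rw [abs_sub_comm]; exact abs_of_nonneg (by linarith)
      calc |iterK Kb (n+1) t s| ≤ _ := le_trans h1 (le_trans h2 (le_of_eq h3))
        _ = M ^ (n+2) * |t - s| ^ (n+1) / (n+1).factorial := by rw [habs]

noncomputable def Jfun (Kb : ℝ → ℝ → ℝ) (g : ℝ → ℝ) (t₀ : ℝ) (n : ℕ) (t : ℝ) : ℝ :=
  ∫ s in t₀..t, iterK Kb n t s * g s

lemma Jfun_cont {Kb : ℝ → ℝ → ℝ} (h : Continuous fun p : ℝ × ℝ => Kb p.1 p.2)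
    {g : ℝ → ℝ} (hg : Continuous g) (t₀ : ℝ) (n : ℕ) :
    Continuous (Jfun Kb g t₀ n) := by
  have hint : Continuous (Function.uncurry fun (t : ℝ) (s : ℝ) => iterK Kb n t s * g s) := by
    exact ((iterK_cont h n).comp (continuous_fst.prodMk continuous_snd)).mul (hg.comp continuous_snd)
  exact continuous_parametric_intervalIntegral_of_continuous hint continuous_id

lemma Jfun_bound {Kb : ℝ → ℝ → ℝ} {M C : ℝ} (hM0 : 0 ≤ M) (hM : ∀ t s, |Kb t s| ≤ M)
    (h : Continuous fun p : ℝ × ℝ => Kb p.1 p.2)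
    {g : ℝ → ℝ} (hC : ∀ s, |g s| ≤ C) (t₀ : ℝ) (n : ℕ) (t : ℝ) :
    |Jfun Kb g t₀ n t| ≤ M ^ (n+1) * C * |t - t₀| ^ (n+1) / n.factorial := by
  have hC0 : 0 ≤ C := le_trans (abs_nonneg _) (hC 0)
  have key : ∀ s ∈ Set.uIoc t₀ t, ‖iterK Kb n t s * g s‖ ≤ M ^ (n+1) * C * |t - t₀| ^ n / n.factorial := by
    intro s hs
    have hss : |t - s| ≤ |t - t₀| := by
      rw [Set.mem_uIoc] at hs
      rcases hs with ⟨h1, h2⟩ | ⟨h1, h2⟩ <;> rw [abs_sub_comm, abs_sub_comm t t₀] <;>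
        rcases abs_cases (s - t) with ⟨e, _⟩ | ⟨e, _⟩ <;>
        rcases abs_cases (t₀ - t) with ⟨e', _⟩ | ⟨e', _⟩ <;> nlinarith
    have h1 : |iterK Kb n t s| ≤ M ^ (n+1) * |t - t₀| ^ n / n.factorial := by
      refine le_trans (iterK_bound hM0 hM h n t s) ?_
      gcongr
      all_goals first | exact abs_nonneg _ | exact hss
    rw [Real.norm_eq_abs, abs_mul]
    calc |iterK Kb n t s| * |g s| ≤ (M ^ (n+1) * |t - t₀| ^ n / n.factorial) * C :=
          mul_le_mul h1 (hC s) (abs_nonneg _) (by positivity)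
      _ = M ^ (n+1) * C * |t - t₀| ^ n / n.factorial := by ring
  have := intervalIntegral.norm_integral_le_of_norm_le_const key
  rw [Real.norm_eq_abs] at this
  calc |Jfun Kb g t₀ n t| ≤ M ^ (n+1) * C * |t - t₀| ^ n / n.factorial * |t - t₀| := this
    _ = M ^ (n+1) * C * |t - t₀| ^ (n+1) / n.factorial := by ring

/-- Interchange of interval integral and tsum, with uniform bounds on `[a,b]`. -/
lemma hasSum_intervalIntegral_tsum {a b : ℝ} (hab : a ≤ b) {h : ℕ → ℝ → ℝ}
    (hc : ∀ n, Continuous (h n)) {u : ℕ → ℝ} (hu : Summable u)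
    (hbd : ∀ n, ∀ s ∈ Set.Icc a b, |h n s| ≤ u n) :
    HasSum (fun n => ∫ s in a..b, h n s) (∫ s in a..b, ∑' n, h n s) := by
  have hInt : ∀ n, Integrable (h n) (volume.restrict (Set.Ioc a b)) := fun n =>
    (hc n).integrableOn_Ioc
  have hSum : Summable fun n => ∫ s in Set.Ioc a b, ‖h n s‖ := by
    apply Summable.of_nonneg_of_le (fun n => integral_nonneg fun s => norm_nonneg _)
      (fun n => ?_) (hu.mul_right (b - a))
    calc (∫ s in Set.Ioc a b, ‖h n s‖)
        ≤ ∫ _s in Set.Ioc a b, u n := by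
          apply setIntegral_mono_on (hInt n).norm (integrable_const _) measurableSet_Ioc
          intro s hs
          rw [Real.norm_eq_abs]
          exact hbd n s (Set.mem_Icc_of_Ioc hs)
      _ = u n * (b - a) := by
          simp [Real.volume_Ioc, ENNReal.toReal_ofReal (by linarith : (0:ℝ) ≤ b - a), mul_comm, hab]
  have := MeasureTheory.hasSum_integral_of_summable_integral_norm (μ := volume.restrict (Set.Ioc a b)) hInt hSum
  simpa [intervalIntegral.integral_of_le hab] using this

lemma Jfun_succ {Kb : ℝ → ℝ → ℝ} {M C : ℝ} (hM0 : 0 ≤ M) (hM : ∀ t s, |Kb t s| ≤ M)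
    (h : Continuous fun p : ℝ × ℝ => Kb p.1 p.2)
    {g : ℝ → ℝ} (hg : Continuous g) (hC : ∀ s, |g s| ≤ C)
    {t₀ t : ℝ} (hle : t₀ ≤ t) (n : ℕ) :
    Jfun Kb g t₀ (n+1) t = ∫ z in t₀..t, Kb t z * Jfun Kb g t₀ n z := by
  have hC0 : 0 ≤ C := le_trans (abs_nonneg _) (hC 0)
  set fn : ℝ × ℝ → ℝ := fun q => Kb t q.2 * iterK Kb n q.2 q.1 * g q.1 with hfn
  have hfncont : Continuous fn := by
    apply Continuous.mul
    · exact ((h.comp ((continuous_const).prodMk continuous_snd)).mul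
        ((iterK_cont h n).comp (continuous_snd.prodMk continuous_fst)))
    · exact hg.comp continuous_fst
  set Φ : ℝ × ℝ → ℝ := {q : ℝ × ℝ | q.1 ≤ q.2}.indicator fn with hΦ
  set μ := volume.restrict (Set.Ioc t₀ t) with hμ
  -- integrability of Φ on μ.prod μ
  have hmeasset : MeasurableSet {q : ℝ × ℝ | q.1 ≤ q.2} := measurableSet_le measurable_fst measurable_snd
  have hmeas : AEStronglyMeasurable Φ (μ.prod μ) :=
    (hfncont.aestronglyMeasurable.indicator hmeasset)
  set B : ℝ := M * (M ^ (n+1) * |t - t₀| ^ n / n.factorial) * C with hB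
  have hΦbd : ∀ q ∈ Set.Ioc t₀ t ×ˢ Set.Ioc t₀ t, ‖Φ q‖ ≤ B := by
    intro q hq
    refine le_trans (norm_indicator_le_norm_self fn q) ?_
    rw [Real.norm_eq_abs, hfn]
    simp only [abs_mul]
    have h1 : |Kb t q.2| ≤ M := hM _ _
    have hd : |q.2 - q.1| ≤ |t - t₀| := by
      rcases hq with ⟨hq1, hq2⟩
      simp only [Set.mem_Ioc] at hq1 hq2
      rw [abs_of_nonneg (by linarith : (0:ℝ) ≤ t - t₀), abs_le]
      constructor <;> linarith [hq1.1, hq1.2, hq2.1, hq2.2]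
    have h2 : |iterK Kb n q.2 q.1| ≤ M ^ (n+1) * |t - t₀| ^ n / n.factorial := by
      refine le_trans (iterK_bound hM0 hM h n q.2 q.1) ?_
      have hp := pow_le_pow_left₀ (abs_nonneg (q.2 - q.1)) hd n
      have hmm : M ^ (n+1) * |q.2 - q.1| ^ n ≤ M ^ (n+1) * |t - t₀| ^ n :=
        mul_le_mul_of_nonneg_left hp (by positivity)
      exact div_le_div_of_nonneg_right hmm (by positivity)
    calc |Kb t q.2| * |iterK Kb n q.2 q.1| * |g q.1| ≤ M * (M ^ (n+1) * |t - t₀| ^ n / n.factorial) * C := by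
          apply mul_le_mul _ (hC _) (abs_nonneg _) (by positivity)
          exact mul_le_mul h1 h2 (abs_nonneg _) hM0
      _ = B := rfl
  have hint : Integrable Φ (μ.prod μ) := by
    constructor
    · exact hmeas
    · apply MeasureTheory.HasFiniteIntegral.of_bounded (C := |B|)
      rw [hμ, Measure.prod_restrict]
      filter_upwards [ae_restrict_mem (measurableSet_Ioc.prod measurableSet_Ioc)] with q hq
      exact le_trans (hΦbd q hq) (le_abs_self B)
  -- the swap
  have hswap : (∫ s, ∫ z, Φ (s, z) ∂μ ∂μ) = ∫ z, ∫ s, Φ (s, z) ∂μ ∂μ :=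
    MeasureTheory.integral_integral_swap hint
  -- identify LHS
  have hL : ∀ s ∈ Set.Ioc t₀ t, (∫ z, Φ (s, z) ∂μ) = iterK Kb (n+1) t s * g s := by
    intro s hs
    have h1 : ∀ z, Φ (s, z) = (Set.Ici s).indicator (fun z => fn (s, z)) z := by
      intro z
      by_cases hz : s ≤ z <;>
        simp [hΦ, Set.indicator_apply, hz, Set.mem_Ici, Set.mem_setOf_eq]
    simp_rw [h1]
    rw [hμ, MeasureTheory.integral_indicator measurableSet_Ici]
    rw [Measure.restrict_restrict measurableSet_Ici]
    have hset : Set.Ici s ∩ Set.Ioc t₀ t = Set.Icc s t := by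
      ext z
      simp only [Set.mem_inter_iff, Set.mem_Ici, Set.mem_Ioc, Set.mem_Icc]
      constructor
      · rintro ⟨h1, _, h3⟩; exact ⟨h1, h3⟩
      · rintro ⟨h1, h2⟩; exact ⟨h1, lt_of_lt_of_le hs.1 h1, h2⟩
    rw [hset, MeasureTheory.integral_Icc_eq_integral_Ioc, ← intervalIntegral.integral_of_le hs.2]
    have : (∫ z in s..t, fn (s, z)) = (∫ z in s..t, Kb t z * iterK Kb n z s) * g s := by
      rw [← intervalIntegral.integral_mul_const]
    rw [this]
    rfl
  have hR : ∀ z ∈ Set.Ioc t₀ t, (∫ s, Φ (s, z) ∂μ) = Kb t z * Jfun Kb g t₀ n z := by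
    intro z hz
    have h1 : ∀ s, Φ (s, z) = (Set.Iic z).indicator (fun s => fn (s, z)) s := by
      intro s
      by_cases hsz : s ≤ z <;>
        simp [hΦ, Set.indicator_apply, hsz, Set.mem_Iic, Set.mem_setOf_eq]
    simp_rw [h1]
    rw [hμ, MeasureTheory.integral_indicator measurableSet_Iic]
    rw [Measure.restrict_restrict measurableSet_Iic]
    have hset : Set.Iic z ∩ Set.Ioc t₀ t = Set.Ioc t₀ z := by
      ext s
      simp only [Set.mem_inter_iff, Set.mem_Iic, Set.mem_Ioc]
      constructor
      · rintro ⟨h1, h2, _⟩; exact ⟨h2, h1⟩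
      · rintro ⟨h1, h2⟩; exact ⟨h2, h1, le_trans h2 hz.2⟩
    rw [hset, ← intervalIntegral.integral_of_le (le_of_lt hz.1)]
    have : (∫ s in t₀..z, fn (s, z)) = Kb t z * ∫ s in t₀..z, iterK Kb n z s * g s := by
      rw [← intervalIntegral.integral_const_mul]
      congr 1
      funext s
      show Kb t z * iterK Kb n z s * g s = _
      ring
    rw [this]
    rfl
  -- assemble
  have e1 : Jfun Kb g t₀ (n+1) t = ∫ s, ∫ z, Φ (s, z) ∂μ ∂μ := by
    rw [Jfun, intervalIntegral.integral_of_le hle, hμ]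
    apply setIntegral_congr_fun measurableSet_Ioc
    intro s hs
    exact (hL s hs).symm
  have e2 : (∫ z, ∫ s, Φ (s, z) ∂μ ∂μ) = ∫ z in t₀..t, Kb t z * Jfun Kb g t₀ n z := by
    rw [intervalIntegral.integral_of_le hle, hμ]
    apply setIntegral_congr_fun measurableSet_Ioc
    intro z hz
    exact hR z hz
  rw [e1, hswap, e2]

lemma contOn_tsum {f : ℕ → ℝ → ℝ} (hf : ∀ n, Continuous (f n)) {u : ℕ → ℝ} (hu : Summable u)
    {s : Set ℝ} (hb : ∀ n, ∀ x ∈ s, |f n x| ≤ u n) :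
    ContinuousOn (fun x => ∑' n, f n x) s := by
  rw [continuousOn_iff_continuous_restrict]
  have : Set.restrict s (fun x => ∑' n, f n x) = fun x : s => ∑' n, f n x.1 := rfl
  show Continuous (fun x : s => ∑' n, f n x.1)
  exact continuous_tsum (fun n => (hf n).comp continuous_subtype_val) hu
    (fun n x => by rw [Real.norm_eq_abs]; exact hb n x.1 x.2)

section Resolvent
variable {Kb : ℝ → ℝ → ℝ} {M C : ℝ} {g : ℝ → ℝ} {t₀ T lam : ℝ}

/-- summable exponential-type bound -/
lemma expSummable (x y : ℝ) : Summable fun n : ℕ => y * (x ^ n / n.factorial) :=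
  (Real.summable_pow_div_factorial x).mul_left y

lemma Jterm_bound (lam : ℝ) (hM0 : 0 ≤ M) (hM : ∀ t s, |Kb t s| ≤ M)
    (h : Continuous fun p : ℝ × ℝ => Kb p.1 p.2) (hC : ∀ s, |g s| ≤ C)
    (hle : t₀ ≤ T) (n : ℕ) (s : ℝ) (hs : s ∈ Set.Icc t₀ T) :
    |lam ^ (n+1) * Jfun Kb g t₀ n s| ≤
      (C * (|lam| * M * (T - t₀))) * ((|lam| * M * (T - t₀)) ^ n / n.factorial) := by
  have hC0 : 0 ≤ C := le_trans (abs_nonneg _) (hC 0)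
  have hst : |s - t₀| ≤ T - t₀ := by
    rcases hs with ⟨h1, h2⟩
    rw [abs_of_nonneg (by linarith)]; linarith
  have hT0 : 0 ≤ T - t₀ := by linarith [hs.1, hs.2]
  rw [abs_mul, abs_pow]
  calc |lam| ^ (n+1) * |Jfun Kb g t₀ n s|
      ≤ |lam| ^ (n+1) * (M ^ (n+1) * C * |s - t₀| ^ (n+1) / n.factorial) := by
        exact mul_le_mul_of_nonneg_left (Jfun_bound hM0 hM h hC t₀ n s) (by positivity)
    _ ≤ |lam| ^ (n+1) * (M ^ (n+1) * C * (T - t₀) ^ (n+1) / n.factorial) := by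
        have := pow_le_pow_left₀ (abs_nonneg (s - t₀)) hst (n+1)
        gcongr
    _ = (C * (|lam| * M * (T - t₀))) * ((|lam| * M * (T - t₀)) ^ n / n.factorial) := by
        rw [mul_pow, mul_pow]
        ring
  
lemma Jterm_summable (hM0 : 0 ≤ M) (hM : ∀ t s, |Kb t s| ≤ M)
    (h : Continuous fun p : ℝ × ℝ => Kb p.1 p.2) (hC : ∀ s, |g s| ≤ C)
    (hle : t₀ ≤ T) (s : ℝ) (hs : s ∈ Set.Icc t₀ T) :
    Summable fun n : ℕ => lam ^ (n+1) * Jfun Kb g t₀ n s := by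
  apply Summable.of_norm_bounded (expSummable (|lam| * M * (T - t₀)) (C * (|lam| * M * (T - t₀))))
  intro n
  rw [Real.norm_eq_abs]
  exact Jterm_bound lam hM0 hM h hC hle n s hs

/-- Continuity on `[t₀, T]` of the resolvent sum against `g`. -/
lemma Ssum_contOn (hM0 : 0 ≤ M) (hM : ∀ t s, |Kb t s| ≤ M)
    (h : Continuous fun p : ℝ × ℝ => Kb p.1 p.2) (hg : Continuous g) (hC : ∀ s, |g s| ≤ C)
    (hle : t₀ ≤ T) :
    ContinuousOn (fun t => ∑' n : ℕ, lam ^ (n+1) * Jfun Kb g t₀ n t) (Set.Icc t₀ T) := by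
  apply contOn_tsum (fun n => (continuous_const.mul (Jfun_cont h hg t₀ n)))
    (expSummable (|lam| * M * (T - t₀)) (C * (|lam| * M * (T - t₀))))
  exact fun n x hx => Jterm_bound lam hM0 hM h hC hle n x hx

/-- The key resolvent identity. -/
lemma resolvent_identity_s6 (hM0 : 0 ≤ M) (hM : ∀ t s, |Kb t s| ≤ M)
    (h : Continuous fun p : ℝ × ℝ => Kb p.1 p.2) (hg : Continuous g) (hC : ∀ s, |g s| ≤ C)
    {t : ℝ} (hle : t₀ ≤ t) :
    ∑' n : ℕ, lam ^ (n+1) * Jfun Kb g t₀ n t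
      = lam * ∫ s in t₀..t, Kb t s * (g s + ∑' n : ℕ, lam ^ (n+1) * Jfun Kb g t₀ n s) := by
  have hC0 : 0 ≤ C := le_trans (abs_nonneg _) (hC 0)
  have hKbt : Continuous fun s => Kb t s := h.comp (continuous_const.prodMk continuous_id)
  set Sg : ℝ → ℝ := fun s => ∑' n : ℕ, lam ^ (n+1) * Jfun Kb g t₀ n s with hSg
  have hSgC : ContinuousOn Sg (Set.Icc t₀ t) := Ssum_contOn hM0 hM h hg hC hle
  -- split integral
  have hint1 : IntervalIntegrable (fun s => Kb t s * g s) volume t₀ t :=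
    (hKbt.mul hg).intervalIntegrable _ _
  have hint2 : IntervalIntegrable (fun s => Kb t s * Sg s) volume t₀ t := by
    apply ContinuousOn.intervalIntegrable
    rw [Set.uIcc_of_le hle]
    exact (hKbt.continuousOn).mul hSgC
  have hsplit : (∫ s in t₀..t, Kb t s * (g s + Sg s))
      = (∫ s in t₀..t, Kb t s * g s) + ∫ s in t₀..t, Kb t s * Sg s := by
    rw [← intervalIntegral.integral_add hint1 hint2]
    congr 1
    funext s
    ring
  -- interchange on second integral
  set u : ℕ → ℝ := fun n => (M * (C * (|lam| * M * (t - t₀)))) * ((|lam| * M * (t - t₀)) ^ n / n.factorial) with hu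
  have hterm : ∀ n, ∀ s ∈ Set.Icc t₀ t, |lam ^ (n+1) * (Kb t s * Jfun Kb g t₀ n s)| ≤ u n := by
    intro n s hs
    have h1 := Jterm_bound (T := t) lam hM0 hM h hC hle n s hs
    have h2 : |lam ^ (n+1) * (Kb t s * Jfun Kb g t₀ n s)| ≤ M * |lam ^ (n+1) * Jfun Kb g t₀ n s| := by
      rw [abs_mul, abs_mul, abs_mul]
      calc |lam ^ (n+1)| * (|Kb t s| * |Jfun Kb g t₀ n s|)
          ≤ |lam ^ (n+1)| * (M * |Jfun Kb g t₀ n s|) := by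
            apply mul_le_mul_of_nonneg_left _ (abs_nonneg _)
            exact mul_le_mul_of_nonneg_right (hM t s) (abs_nonneg _)
        _ = M * (|lam ^ (n+1)| * |Jfun Kb g t₀ n s|) := by ring
    refine le_trans h2 ?_
    rw [hu]
    calc M * |lam ^ (n+1) * Jfun Kb g t₀ n s|
        ≤ M * ((C * (|lam| * M * (t - t₀))) * ((|lam| * M * (t - t₀)) ^ n / n.factorial)) := by
          exact mul_le_mul_of_nonneg_left h1 hM0
      _ = _ := by ring
  have husum : Summable u := expSummable _ _
  have hcont : ∀ n : ℕ, Continuous fun s => lam ^ (n+1) * (Kb t s * Jfun Kb g t₀ n s) :=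
    fun n => continuous_const.mul (hKbt.mul (Jfun_cont h hg t₀ n))
  have hHS := hasSum_intervalIntegral_tsum hle hcont husum hterm
  have heq2 : (∫ s in t₀..t, Kb t s * Sg s) = ∑' n : ℕ, lam ^ (n+1) * Jfun Kb g t₀ (n+1) t := by
    have hpt : ∀ s, Kb t s * Sg s = ∑' n : ℕ, lam ^ (n+1) * (Kb t s * Jfun Kb g t₀ n s) := by
      intro s
      rw [hSg, ← tsum_mul_left]
      congr 1
      funext n
      ring
    have hterm_int : ∀ n : ℕ, (∫ s in t₀..t, lam ^ (n+1) * (Kb t s * Jfun Kb g t₀ n s))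
        = lam ^ (n+1) * Jfun Kb g t₀ (n+1) t := by
      intro n
      rw [intervalIntegral.integral_const_mul, ← Jfun_succ hM0 hM h hg hC hle n]
    calc (∫ s in t₀..t, Kb t s * Sg s)
        = ∫ s in t₀..t, ∑' n : ℕ, lam ^ (n+1) * (Kb t s * Jfun Kb g t₀ n s) := by
          congr 1; funext s; exact hpt s
      _ = ∑' n : ℕ, ∫ s in t₀..t, lam ^ (n+1) * (Kb t s * Jfun Kb g t₀ n s) := hHS.tsum_eq.symm
      _ = ∑' n : ℕ, lam ^ (n+1) * Jfun Kb g t₀ (n+1) t := by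
          congr 1; funext n; exact hterm_int n
  -- assemble via index shift
  have hsumm : Summable fun n : ℕ => lam ^ (n+1) * Jfun Kb g t₀ n t :=
    Jterm_summable hM0 hM h hC hle t ⟨hle, le_refl t⟩
  have hshift := Summable.tsum_eq_zero_add hsumm
  rw [hsplit, mul_add, heq2]
  rw [hshift]
  have h00 : (∫ s in t₀..t, Kb t s * g s) = Jfun Kb g t₀ 0 t := rfl
  rw [h00, ← tsum_mul_left]
  congr 1
  · simp
  · exact tsum_congr fun n => by ring

end Resolvent

lemma Rsum_integral {Kb : ℝ → ℝ → ℝ} {M C : ℝ} {g : ℝ → ℝ} {t₀ lam : ℝ}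
    (hM0 : 0 ≤ M) (hM : ∀ t s, |Kb t s| ≤ M)
    (h : Continuous fun p : ℝ × ℝ => Kb p.1 p.2) (hg : Continuous g) (hC : ∀ s, |g s| ≤ C)
    {t : ℝ} (hle : t₀ ≤ t) :
    (∫ s in t₀..t, (∑' n : ℕ, lam ^ (n+1) * iterK Kb n t s) * g s)
      = ∑' n : ℕ, lam ^ (n+1) * Jfun Kb g t₀ n t := by
  have hC0 : 0 ≤ C := le_trans (abs_nonneg _) (hC 0)
  have h1 : ∀ s, (∑' n : ℕ, lam ^ (n+1) * iterK Kb n t s) * g s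
      = ∑' n : ℕ, lam ^ (n+1) * (iterK Kb n t s * g s) := by
    intro s
    rw [← tsum_mul_right]
    exact tsum_congr fun n => by ring
  have hcont : ∀ n : ℕ, Continuous fun s => lam ^ (n+1) * (iterK Kb n t s * g s) := by
    intro n
    apply continuous_const.mul
    exact (((iterK_cont h n).comp (continuous_const.prodMk continuous_id)).mul hg)
  have hbd : ∀ n : ℕ, ∀ s ∈ Set.Icc t₀ t, |lam ^ (n+1) * (iterK Kb n t s * g s)|
      ≤ (C * (|lam| * M)) * ((|lam| * M * (t - t₀)) ^ n / n.factorial) := by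
    intro n s hs
    have hts : |t - s| ≤ t - t₀ := by
      rw [abs_of_nonneg (by linarith [hs.2] : (0:ℝ) ≤ t - s)]
      linarith [hs.1]
    have h2 := iterK_bound hM0 hM h n t s
    have h3 : |iterK Kb n t s| ≤ M ^ (n+1) * (t - t₀) ^ n / n.factorial := by
      refine le_trans h2 ?_
      have hp := pow_le_pow_left₀ (abs_nonneg (t - s)) hts n
      have hmm : M ^ (n+1) * |t - s| ^ n ≤ M ^ (n+1) * (t - t₀) ^ n :=
        mul_le_mul_of_nonneg_left hp (by positivity)
      exact div_le_div_of_nonneg_right hmm (by positivity)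
    rw [abs_mul, abs_mul, abs_pow]
    have ht0 : (0:ℝ) ≤ t - t₀ := by linarith
    calc |lam| ^ (n+1) * (|iterK Kb n t s| * |g s|)
        ≤ |lam| ^ (n+1) * ((M ^ (n+1) * (t - t₀) ^ n / n.factorial) * C) := by
          apply mul_le_mul_of_nonneg_left _ (by positivity)
          exact mul_le_mul h3 (hC s) (abs_nonneg _) (by positivity)
      _ = (C * (|lam| * M)) * ((|lam| * M * (t - t₀)) ^ n / n.factorial) := by
          rw [mul_pow, mul_pow]
          ring
  have hHS := hasSum_intervalIntegral_tsum hle hcont (expSummable (|lam| * M * (t - t₀)) (C * (|lam| * M))) hbd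
  calc (∫ s in t₀..t, (∑' n : ℕ, lam ^ (n+1) * iterK Kb n t s) * g s)
      = ∫ s in t₀..t, ∑' n : ℕ, lam ^ (n+1) * (iterK Kb n t s * g s) := by
        congr 1; funext s; exact h1 s
    _ = ∑' n : ℕ, ∫ s in t₀..t, lam ^ (n+1) * (iterK Kb n t s * g s) := hHS.tsum_eq.symm
    _ = ∑' n : ℕ, lam ^ (n+1) * Jfun Kb g t₀ n t := by
        exact tsum_congr fun n => by rw [intervalIntegral.integral_const_mul]; rfl


end LVIEAux

open MeasureTheory Matrix intervalIntegral

/-- If c solves the linear system A(λ) c = d(λ), then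
x(t) := F(t,λ) − Σⱼ bⱼ(t,λ) cⱼ is a continuous solution of the LVIE with x(tⱼ) = cⱼ. -/

theorem slae_solution_gives_lvie_solution
    (t₀ T : ℝ) (ht : t₀ < T) (m : ℕ) (hm : 2 ≤ m)
    (p : Fin (m - 1) → ℝ) (hpmono : StrictMono p)
    (hp : ∀ j, t₀ < p j ∧ p j < T)
    (f : ℝ → ℝ) (hf : ContinuousOn f (Set.Icc t₀ T))
    (a : Fin (m - 1) → ℝ → ℝ) (ha : ∀ j, ContinuousOn (a j) (Set.Icc t₀ T))
    (K : ℝ → ℝ → ℝ)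
    (hK : ContinuousOn (fun q : ℝ × ℝ => K q.1 q.2)
      {q : ℝ × ℝ | t₀ ≤ q.2 ∧ q.2 ≤ q.1 ∧ q.1 ≤ T})
    (lam : ℝ)
    (Kn : ℕ → ℝ → ℝ → ℝ)
    (hKn1 : ∀ t s, Kn 1 t s = K t s)
    (hKnrec : ∀ n, 2 ≤ n → ∀ t s, Kn n t s = ∫ z in s..t, K t z * Kn (n - 1) z s)
    (R : ℝ → ℝ → ℝ → ℝ)
    (hR : ∀ t s lam', R t s lam' = ∑' n : ℕ, lam' ^ (n + 1) * Kn (n + 1) t s)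
    (F : ℝ → ℝ → ℝ)
    (hF : ∀ t lam', F t lam' = f t + ∫ s in t₀..t, R t s lam' * f s)
    (b : Fin (m - 1) → ℝ → ℝ → ℝ)
    (hb : ∀ j t lam', b j t lam' = a j t + ∫ s in t₀..t, R t s lam' * a j s)
    (A : Matrix (Fin (m - 1)) (Fin (m - 1)) ℝ)
    (hA : ∀ i j, A i j = (if i = j then 1 else 0) + b j (p i) lam)
    (d : Fin (m - 1) → ℝ)
    (hd : ∀ i, d i = F (p i) lam)
    (c : Fin (m - 1) → ℝ) (hc : A *ᵥ c = d) :
    ContinuousOn (fun t => F t lam - ∑ j, b j t lam * c j) (Set.Icc t₀ T) ∧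
    (∀ t ∈ Set.Icc t₀ T,
      (F t lam - ∑ j, b j t lam * c j)
          + ∑ j, a j t * (F (p j) lam - ∑ i, b i (p j) lam * c i) =
        lam * (∫ s in t₀..t, K t s * (F s lam - ∑ j, b j s lam * c j)) + f t) ∧
    (∀ j, F (p j) lam - ∑ i, b i (p j) lam * c i = c j) := by
  have hT : t₀ ≤ T := le_of_lt ht
  -- clamping map
  set π : ℝ → ℝ := fun u => max t₀ (min u T) with hπ
  have hπc : Continuous π := continuous_const.max (continuous_id.min continuous_const)
  have hπmem : ∀ u, π u ∈ Set.Icc t₀ T := fun u =>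
    ⟨le_max_left _ _, max_le hT (min_le_right _ _)⟩
  have hπid : ∀ u ∈ Set.Icc t₀ T, π u = u := by
    rintro u ⟨h1, h2⟩
    rw [hπ]
    simp only [min_eq_left h2, max_eq_right h1]
  -- extended kernel
  set Kb : ℝ → ℝ → ℝ := fun t s => K (π t) (max t₀ (min s (π t))) with hKbdef
  have hmapS : ∀ q : ℝ × ℝ, ((π q.1, max t₀ (min q.2 (π q.1))) : ℝ × ℝ)
      ∈ {q : ℝ × ℝ | t₀ ≤ q.2 ∧ q.2 ≤ q.1 ∧ q.1 ≤ T} := fun q =>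
    ⟨le_max_left _ _, max_le (hπmem q.1).1 (min_le_right _ _), (hπmem q.1).2⟩
  have hKbc : Continuous fun q : ℝ × ℝ => Kb q.1 q.2 := by
    have hproj : Continuous fun q : ℝ × ℝ => ((π q.1, max t₀ (min q.2 (π q.1))) : ℝ × ℝ) :=
      (hπc.comp continuous_fst).prodMk
        (continuous_const.max (continuous_snd.min (hπc.comp continuous_fst)))
    exact hK.comp_continuous hproj hmapS
  have hKbeq : ∀ t s, t₀ ≤ s → s ≤ t → t ≤ T → Kb t s = K t s := by
    intro t s h1 h2 h3
    have hπt : π t = t := hπid t ⟨le_trans h1 h2, h3⟩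
    rw [hKbdef]
    simp only [hπt, min_eq_left h2, max_eq_right h1]
  -- bound on Kb
  have hScomp : IsCompact {q : ℝ × ℝ | t₀ ≤ q.2 ∧ q.2 ≤ q.1 ∧ q.1 ≤ T} := by
    apply IsCompact.of_isClosed_subset (isCompact_Icc.prod isCompact_Icc)
    · have hrw : {q : ℝ × ℝ | t₀ ≤ q.2 ∧ q.2 ≤ q.1 ∧ q.1 ≤ T}
          = {q : ℝ × ℝ | t₀ ≤ q.2} ∩ ({q : ℝ × ℝ | q.2 ≤ q.1} ∩ {q : ℝ × ℝ | q.1 ≤ T}) := by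
        ext q
        simp only [Set.mem_setOf_eq, Set.mem_inter_iff]
      rw [hrw]
      exact (isClosed_le continuous_const continuous_snd).inter
        ((isClosed_le continuous_snd continuous_fst).inter
          (isClosed_le continuous_fst continuous_const))
    · rintro ⟨x, y⟩ ⟨h1, h2, h3⟩
      exact ⟨⟨le_trans h1 h2, h3⟩, ⟨h1, le_trans h2 h3⟩⟩
  obtain ⟨M0, hM0b⟩ := hScomp.exists_bound_of_continuousOn hK
  set M : ℝ := max M0 0 with hMdef
  have hM0 : (0:ℝ) ≤ M := le_max_right _ _
  have hM : ∀ t s, |Kb t s| ≤ M := by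
    intro t s
    have := hM0b _ (hmapS (t, s))
    rw [Real.norm_eq_abs] at this
    exact le_trans this (le_max_left _ _)
  -- extended data functions
  set f' : ℝ → ℝ := fun s => f (π s) with hf'def
  have hf'c : Continuous f' := hf.comp_continuous hπc hπmem
  have hf'eq : ∀ s ∈ Set.Icc t₀ T, f' s = f s := fun s hs => by
    show f (π s) = f s
    rw [hπid s hs]
  obtain ⟨Cf, hCfb⟩ := isCompact_Icc.exists_bound_of_continuousOn hf
  have hCf : ∀ s, |f' s| ≤ Cf := fun s => by
    have := hCfb (π s) (hπmem s)
    rwa [Real.norm_eq_abs] at this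
  set a' : Fin (m-1) → ℝ → ℝ := fun j s => a j (π s) with ha'def
  have ha'c : ∀ j, Continuous (a' j) := fun j => (ha j).comp_continuous hπc hπmem
  have ha'eq : ∀ j, ∀ s ∈ Set.Icc t₀ T, a' j s = a j s := fun j s hs => by
    show a j (π s) = a j s
    rw [hπid s hs]
  choose Ca hCab using fun j => isCompact_Icc.exists_bound_of_continuousOn (ha j)
  have hCa : ∀ j s, |a' j s| ≤ Ca j := fun j s => by
    have := hCab j (π s) (hπmem s)
    rwa [Real.norm_eq_abs] at this
  -- iterated kernels agree on the triangle
  have hiter : ∀ n, ∀ t s : ℝ, t₀ ≤ s → s ≤ t → t ≤ T → Kn (n+1) t s = iterK Kb n t s := by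
    intro n
    induction n with
    | zero =>
      intro t s h1 h2 h3
      rw [hKn1]
      exact (hKbeq t s h1 h2 h3).symm
    | succ n ih =>
      intro t s h1 h2 h3
      rw [hKnrec (n+2) (by omega) t s]
      show (∫ z in s..t, K t z * Kn (n+2-1) z s) = ∫ z in s..t, Kb t z * iterK Kb n z s
      apply intervalIntegral.integral_congr
      intro z hz
      rw [Set.uIcc_of_le h2] at hz
      show K t z * Kn (n+1) z s = Kb t z * iterK Kb n z s
      rw [hKbeq t z (le_trans h1 hz.1) hz.2 h3, ih z s h1 hz.1 (le_trans hz.2 h3)]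
  have hRs : ∀ t s : ℝ, t₀ ≤ s → s ≤ t → t ≤ T →
      R t s lam = ∑' n : ℕ, lam ^ (n+1) * iterK Kb n t s := by
    intro t s h1 h2 h3
    rw [hR]
    exact tsum_congr fun n => by rw [hiter n t s h1 h2 h3]
  -- the series sums
  set Sf : ℝ → ℝ := fun u => ∑' n : ℕ, lam ^ (n+1) * Jfun Kb f' t₀ n u with hSfdef
  set Sa : Fin (m-1) → ℝ → ℝ := fun j u => ∑' n : ℕ, lam ^ (n+1) * Jfun Kb (a' j) t₀ n u with hSadef
  -- integral identity for F and b
  have hint_gen : ∀ (g g' : ℝ → ℝ) (C : ℝ), Continuous g' → (∀ s, |g' s| ≤ C) →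
      (∀ s ∈ Set.Icc t₀ T, g' s = g s) → ∀ t ∈ Set.Icc t₀ T,
      (∫ s in t₀..t, R t s lam * g s) = ∑' n : ℕ, lam ^ (n+1) * Jfun Kb g' t₀ n t := by
    intro g g' C hg'c hCg hgeq t htm
    have hcg : ∀ s ∈ Set.uIcc t₀ t, R t s lam * g s
        = (∑' n : ℕ, lam ^ (n+1) * iterK Kb n t s) * g' s := by
      intro s hs
      rw [Set.uIcc_of_le htm.1] at hs
      rw [hRs t s hs.1 hs.2 htm.2, hgeq s ⟨hs.1, le_trans hs.2 htm.2⟩]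
    rw [intervalIntegral.integral_congr hcg]
    exact Rsum_integral hM0 hM hKbc hg'c hCg htm.1
  have hFeq : ∀ t ∈ Set.Icc t₀ T, F t lam = f t + Sf t := by
    intro t htm
    rw [hF, hSfdef]
    congr 1
    exact hint_gen f f' Cf hf'c hCf hf'eq t htm
  have hbeq : ∀ j, ∀ t ∈ Set.Icc t₀ T, b j t lam = a j t + Sa j t := by
    intro j t htm
    rw [hb, hSadef]
    congr 1
    exact hint_gen (a j) (a' j) (Ca j) (ha'c j) (hCa j) (ha'eq j) t htm
  -- bullet 3
  have h3 : ∀ i, F (p i) lam - ∑ j, b j (p i) lam * c j = c i := by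
    intro i
    have h0 := congrFun hc i
    simp only [Matrix.mulVec, dotProduct, hA, hd] at h0
    simp only [add_mul, Finset.sum_add_distrib, ite_mul, one_mul, zero_mul,
      Finset.sum_ite_eq, Finset.mem_univ, if_true] at h0
    linarith
  -- bullet 1
  have hΦc : ContinuousOn
      (fun t => (f' t + Sf t) - ∑ j, (a' j t + Sa j t) * c j) (Set.Icc t₀ T) := by
    apply ContinuousOn.sub
    · exact (hf'c.continuousOn).add (Ssum_contOn hM0 hM hKbc hf'c hCf hT)
    · apply continuousOn_finset_sum
      intro j _
      exact (((ha'c j).continuousOn).add (Ssum_contOn hM0 hM hKbc (ha'c j) (hCa j) hT)).mul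
        continuousOn_const
  have hxeq : Set.EqOn (fun t => F t lam - ∑ j, b j t lam * c j)
      (fun t => (f' t + Sf t) - ∑ j, (a' j t + Sa j t) * c j) (Set.Icc t₀ T) := by
    intro t htm
    simp only
    rw [hFeq t htm, hf'eq t htm]
    congr 1
    refine Finset.sum_congr rfl fun j _ => ?_
    rw [hbeq j t htm, ha'eq j t htm]
  refine ⟨hΦc.congr hxeq, ?_, h3⟩
  -- bullet 2
  intro t htm
  have hsubT : Set.Icc t₀ t ⊆ Set.Icc t₀ T := Set.Icc_subset_Icc_right htm.2
  have hKbtc : Continuous fun s => Kb t s := hKbc.comp (continuous_const.prodMk continuous_id)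
  set U : ℝ → ℝ := fun s => f' s + Sf s with hUdef
  set V : Fin (m-1) → ℝ → ℝ := fun j s => a' j s + Sa j s with hVdef
  have hUc : ContinuousOn U (Set.Icc t₀ T) :=
    (hf'c.continuousOn).add (Ssum_contOn hM0 hM hKbc hf'c hCf hT)
  have hVc : ∀ j, ContinuousOn (V j) (Set.Icc t₀ T) := fun j =>
    ((ha'c j).continuousOn).add (Ssum_contOn hM0 hM hKbc (ha'c j) (hCa j) hT)
  have hUi : IntervalIntegrable (fun s => Kb t s * U s) volume t₀ t := by
    apply ContinuousOn.intervalIntegrable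
    rw [Set.uIcc_of_le htm.1]
    exact (hKbtc.continuousOn).mul (hUc.mono hsubT)
  have hVi : ∀ j, IntervalIntegrable (fun s => Kb t s * V j s * c j) volume t₀ t := by
    intro j
    apply ContinuousOn.intervalIntegrable
    rw [Set.uIcc_of_le htm.1]
    exact ((hKbtc.continuousOn).mul ((hVc j).mono hsubT)).mul continuousOn_const
  -- rewrite the integrand of the RHS
  have hxs : ∀ s ∈ Set.uIcc t₀ t, K t s * (F s lam - ∑ j, b j s lam * c j)
      = Kb t s * U s - ∑ j, Kb t s * V j s * c j := by
    intro s hs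
    rw [Set.uIcc_of_le htm.1] at hs
    have hsT : s ∈ Set.Icc t₀ T := hsubT hs
    rw [← hKbeq t s hs.1 hs.2 htm.2, hFeq s hsT]
    have hbsum : (∑ j, b j s lam * c j) = ∑ j, V j s * c j := by
      refine Finset.sum_congr rfl fun j _ => ?_
      rw [hbeq j s hsT]
      show (a j s + Sa j s) * c j = (a' j s + Sa j s) * c j
      rw [ha'eq j s hsT]
    rw [hbsum]
    have hUs : U s = f s + Sf s := by
      show f' s + Sf s = f s + Sf s
      rw [hf'eq s hsT]
    rw [← hUs, mul_sub, Finset.mul_sum]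
    congr 1
    exact Finset.sum_congr rfl fun j _ => by ring
  have hintrw : (∫ s in t₀..t, K t s * (F s lam - ∑ j, b j s lam * c j))
      = (∫ s in t₀..t, Kb t s * U s) - ∑ j, (∫ s in t₀..t, Kb t s * V j s) * c j := by
    have hVsum : IntervalIntegrable (fun x => ∑ j, Kb t x * V j x * c j) volume t₀ t := by
      apply ContinuousOn.intervalIntegrable
      rw [Set.uIcc_of_le htm.1]
      apply continuousOn_finset_sum
      intro j _
      exact ((hKbtc.continuousOn).mul ((hVc j).mono hsubT)).mul continuousOn_const
    rw [intervalIntegral.integral_congr hxs]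
    rw [intervalIntegral.integral_sub hUi hVsum]
    congr 1
    rw [intervalIntegral.integral_finset_sum (fun j _ => hVi j)]
    exact Finset.sum_congr rfl fun j _ => by rw [intervalIntegral.integral_mul_const]
  -- resolvent identities
  have hrf : Sf t = lam * ∫ s in t₀..t, Kb t s * U s :=
    resolvent_identity_s6 hM0 hM hKbc hf'c hCf htm.1
  have hra : ∀ j, Sa j t = lam * ∫ s in t₀..t, Kb t s * V j s := fun j =>
    resolvent_identity_s6 hM0 hM hKbc (ha'c j) (hCa j) htm.1
  have hRHS : lam * (∫ s in t₀..t, K t s * (F s lam - ∑ j, b j s lam * c j))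
      = Sf t - ∑ j, Sa j t * c j := by
    rw [hintrw, mul_sub, Finset.mul_sum, ← hrf]
    congr 1
    refine Finset.sum_congr rfl fun j _ => ?_
    rw [hra j]
    ring
  rw [hRHS, hFeq t htm]
  have hsum1 : (∑ j, b j t lam * c j) = ∑ j, (a j t * c j + Sa j t * c j) :=
    Finset.sum_congr rfl fun j _ => by rw [hbeq j t htm]; ring
  have hsum2 : (∑ j, a j t * (F (p j) lam - ∑ i, b i (p j) lam * c i)) = ∑ j, a j t * c j :=
    Finset.sum_congr rfl fun j _ => by rw [h3 j]
  rw [hsum1, hsum2, Finset.sum_add_distrib]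
  ring
end
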